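/- arXiv:2309.13346 — 5 statements merged into one kernel-verified Lean document; each statement's English description precedes it below -/
import Mathlib

section
/- Let π ≃ ⟪a₁,…,aₙ⟫ be an anisotropic quasi-Pfister form over F and let K/F be a field extension with K = F(α₁,…,αₙ) where αᵢᵖ equals the image of aᵢ in K for each i. Assume that φ ≃ π ⊗ φ′ and ψ ≃ π ⊗ ψ′ are anisotropic diagonal quasilinear p-forms over F (φ′, ψ′ over F) such that φ′_K and ψ′_K are similar over K. Then φ and ψ are similar over F. -/
/-!
Diagonal quasilinear `p`-forms over a field `F` of characteristic `p`,
following Hoffmann and Zemková. A form of dimension `n` is recorded by its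
coefficient tuple `a : ι → F` (for a finite index type `ι`), the form being
`x ↦ ∑ i, a i * (x i)^p`.
-/

universe u

namespace QLF

open scoped BigOperators

/-- Evaluation of the diagonal quasilinear `p`-form with coefficients `a` at `x`. -/
def eval (p : ℕ) {F : Type*} [CommRing F] {ι : Type*} [Fintype ι]
    (a : ι → F) (x : ι → F) : F :=
  ∑ i, a i * x i ^ p

/-- A form is isotropic if it has a nontrivial zero. -/
def Isotropic (p : ℕ) {F : Type*} [CommRing F] {ι : Type*} [Fintype ι] (a : ι → F) : Prop :=
  ∃ x : ι → F, x ≠ 0 ∧ eval p a x = 0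

/-- A form is anisotropic if it has no nontrivial zero. -/
def Anisotropic (p : ℕ) {F : Type*} [CommRing F] {ι : Type*} [Fintype ι] (a : ι → F) : Prop :=
  ¬ Isotropic p a

/-- In characteristic `p`, the zero set of a diagonal quasilinear `p`-form is a
linear subspace. -/
def zeroSubmodule (p : ℕ) [Fact p.Prime] {F : Type*} [Field F] [CharP F p]
    {ι : Type*} [Fintype ι] (a : ι → F) : Submodule F (ι → F) where
  carrier := {x | eval p a x = 0}
  zero_mem' := by
    have hp : p ≠ 0 := (Fact.out : p.Prime).ne_zero
    simp [eval, zero_pow hp]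
  add_mem' := by
    intro x y hx hy
    haveI : ExpChar F p := .prime Fact.out
    have hxy : eval p a (x + y) = eval p a x + eval p a y := by
      simp only [eval, Pi.add_apply]
      rw [← Finset.sum_add_distrib]
      exact Finset.sum_congr rfl fun i _ => by rw [add_pow_char, mul_add]
    simp only [Set.mem_setOf_eq] at *
    rw [hxy, hx, hy, add_zero]
  smul_mem' := by
    intro c x hx
    simp only [Set.mem_setOf_eq] at *
    have hcx : eval p a (c • x) = c ^ p * eval p a x := by
      simp only [eval, Pi.smul_apply, smul_eq_mul, Finset.mul_sum]
      exact Finset.sum_congr rfl fun i _ => by rw [mul_pow]; ring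
    rw [hcx, hx, mul_zero]

/-- The defect `i₀` of a form: the dimension of its zero set. -/
noncomputable def defect (p : ℕ) [Fact p.Prime] {F : Type*} [Field F] [CharP F p]
    {ι : Type*} [Fintype ι] (a : ι → F) : ℕ :=
  Module.finrank F (zeroSubmodule p a)

/-- Isometry of forms: a linear bijection carrying one form into the other. -/
def Isometric (p : ℕ) {F : Type*} [Field F] {ι κ : Type*} [Fintype ι] [Fintype κ]
    (a : ι → F) (b : κ → F) : Prop :=
  ∃ T : (ι → F) ≃ₗ[F] (κ → F), ∀ x, eval p a x = eval p b (T x)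

/-- `a` is a subform of `b`. -/
def Subform (p : ℕ) {F : Type*} [Field F] {ι κ : Type*} [Fintype ι] [Fintype κ]
    (a : ι → F) (b : κ → F) : Prop :=
  ∃ T : (ι → F) →ₗ[F] (κ → F), Function.Injective T ∧ ∀ x, eval p a x = eval p b (T x)

/-- Similarity of forms: `a ≃ c·b` for some scalar `c ≠ 0`. -/
def Similar (p : ℕ) {F : Type*} [Field F] {ι κ : Type*} [Fintype ι] [Fintype κ]
    (a : ι → F) (b : κ → F) : Prop :=
  ∃ c : F, c ≠ 0 ∧ Isometric p a (fun i => c * b i)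

/-- Vishik equivalence: same dimension, and equal defects over every field
extension `E/F`. -/
def VishikEquiv (p : ℕ) [Fact p.Prime] {F : Type u} [Field F] [CharP F p]
    {ι κ : Type*} [Fintype ι] [Fintype κ] (a : ι → F) (b : κ → F) : Prop :=
  Fintype.card ι = Fintype.card κ ∧
    ∀ (E : Type u) [Field E] [CharP E p] (f : F →+* E),
      defect p (f ∘ a) = defect p (f ∘ b)

/-- Weak Vishik equivalence: same dimension, and equal defects over every field
extension of the shape `E = F(α)` with `αᵖ ∈ F` (this includes `E = F`). -/
def WeakVishikEquiv (p : ℕ) [Fact p.Prime] {F : Type u} [Field F] [CharP F p]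
    {ι κ : Type*} [Fintype ι] [Fintype κ] (a : ι → F) (b : κ → F) : Prop :=
  Fintype.card ι = Fintype.card κ ∧
    ∀ (E : Type u) [Field E] [CharP E p] (f : F →+* E) (α : E),
      α ^ p ∈ Set.range ⇑f →
      Subfield.closure (insert α (Set.range ⇑f)) = ⊤ →
      defect p (f ∘ a) = defect p (f ∘ b)

/-- The set `Fᵖ` of `p`-th powers. -/
def pSet (p : ℕ) (F : Type*) [Field F] : Set F := Set.range fun x : F => x ^ p

/-- The subfield `Fᵖ` of `p`-th powers (in characteristic `p` the set of `p`-th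
powers is already a subfield, so the closure adds nothing). -/
def pthSubfield (p : ℕ) (F : Type*) [Field F] : Subfield F :=
  Subfield.closure (pSet p F)

/-- The subfield `Fᵖ(s)` generated by a set `s` over `Fᵖ`. -/
def adjoin (p : ℕ) {F : Type*} [Field F] (s : Set F) : Subfield F :=
  Subfield.closure (pSet p F ∪ s)

/-- The degree `[N : k]` of a subfield `N` over a subfield `k` (for `k ≤ N`,
the `k`-span of `N` in `F` is `N` itself, so this is the `k`-dimension of `N`). -/
noncomputable def degOver {F : Type*} [Field F] (k : Subfield F) (N : Subfield F) : ℕ :=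
  Module.finrank k (Submodule.span k (N : Set F))

/-- The set `D_F(φ)` of values of the form. -/
def values (p : ℕ) {F : Type*} [CommRing F] {ι : Type*} [Fintype ι] (a : ι → F) : Set F :=
  Set.range (eval p a)

/-- The norm field `N_F(φ)`: the subfield generated over `Fᵖ` by all quotients
of nonzero values of `φ`. -/
def normField (p : ℕ) {F : Type*} [Field F] {ι : Type*} [Fintype ι] (a : ι → F) : Subfield F :=
  adjoin p {z : F | ∃ u ∈ values p a, ∃ v ∈ values p a, u ≠ 0 ∧ v ≠ 0 ∧ z = u / v}

/-- The norm degree `ndeg_F(φ) = [N_F(φ) : Fᵖ]`. -/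
noncomputable def ndeg (p : ℕ) {F : Type*} [Field F] {ι : Type*} [Fintype ι] (a : ι → F) : ℕ :=
  degOver (pthSubfield p F) (normField p a)

/-- An anisotropic form is minimal if `ndeg_F(φ) = p^(dim φ - 1)`. -/
def Minimal (p : ℕ) {F : Type*} [Field F] {ι : Type*} [Fintype ι] (a : ι → F) : Prop :=
  Anisotropic p a ∧ ndeg p a = p ^ (Fintype.card ι - 1)

/-- The quasi-Pfister form `⟪b₁,…,bₙ⟫`: its coefficients are all products
`b₁^{e₁}⋯bₙ^{eₙ}` with `0 ≤ eᵢ ≤ p-1`. -/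
def pfister (p : ℕ) {F : Type*} [CommRing F] {n : ℕ} (b : Fin n → F) :
    (Fin n → Fin p) → F :=
  fun e => ∏ i, b i ^ (e i : ℕ)

/-- A form is a quasi-Pfister form if it is isometric to some `⟪b₁,…,bₙ⟫`
with all `bᵢ ∈ F×`. -/
def IsQuasiPfister (p : ℕ) {F : Type*} [Field F] {ι : Type*} [Fintype ι] (a : ι → F) : Prop :=
  ∃ (n : ℕ) (b : Fin n → F), (∀ i, b i ≠ 0) ∧ Isometric p a (pfister p b)

/-- `a` is a quasi-Pfister neighbor of the form `π`: `c·a ⊆ π` for some `c ≠ 0`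
and `p · dim a > dim π`. -/
def IsNeighborOf (p : ℕ) {F : Type*} [Field F] {ι κ : Type*} [Fintype ι] [Fintype κ]
    (a : ι → F) (π : κ → F) : Prop :=
  ∃ c : F, c ≠ 0 ∧ Subform p (fun i => c * a i) π ∧ p * Fintype.card ι > Fintype.card κ

/-- `a` is a quasi-Pfister neighbor (of some quasi-Pfister form). -/
def IsQPNeighbor (p : ℕ) {F : Type*} [Field F] {ι : Type*} [Fintype ι] (a : ι → F) : Prop :=
  ∃ (n : ℕ) (b : Fin n → F), (∀ i, b i ≠ 0) ∧ IsNeighborOf p a (pfister p b)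

/-- `a` is a quasi-Pfister neighbor of codimension one of some anisotropic
quasi-Pfister form: `dim π - dim a = 1`. -/
def IsQPNeighborCodimOne (p : ℕ) {F : Type*} [Field F] {ι : Type*} [Fintype ι]
    (a : ι → F) : Prop :=
  ∃ (n : ℕ) (b : Fin n → F), (∀ i, b i ≠ 0) ∧ Anisotropic p (pfister p b) ∧
    IsNeighborOf p a (pfister p b) ∧ Fintype.card ι + 1 = p ^ n

/-- Tensor product of diagonal forms: coefficients `aᵢ · bⱼ`. -/
def tensor (p : ℕ) {F : Type*} [CommRing F] {ι κ : Type*}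
    (a : ι → F) (b : κ → F) : ι × κ → F :=
  fun ik => a ik.1 * b ik.2

/-- The set `G_F(φ) = {x ∈ F× : xφ ≃ φ} ∪ {0}` of similarity factors. -/
def simFactors (p : ℕ) {F : Type*} [Field F] {ι : Type*} [Fintype ι] (a : ι → F) : Set F :=
  {x | x ≠ 0 ∧ Isometric p (fun i => x * a i) a} ∪ {0}

/-- `b` is the anisotropic part of `a`: `b` is anisotropic and
`a ≃ b ⊥ (m × ⟨0⟩)` for some `m`. -/
def IsAnisotropicPart (p : ℕ) {F : Type*} [Field F] {ι κ : Type*} [Fintype ι] [Fintype κ]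
    (a : ι → F) (b : κ → F) : Prop :=
  Anisotropic p b ∧ ∃ m : ℕ, Isometric p a (Sum.elim b fun _ : Fin m => (0 : F))

/-- `⟪c₁,…,cₘ⟫` is (a representative of) the norm form of `a`:
`N_F(a) = Fᵖ(c₁,…,cₘ)` and `ndeg_F(a) = pᵐ`. -/
def IsNormForm (p : ℕ) {F : Type*} [Field F] {ι : Type*} [Fintype ι] (a : ι → F)
    {m : ℕ} (c : Fin m → F) : Prop :=
  normField p a = adjoin p (Set.range c) ∧ ndeg p a = p ^ m

end QLF

namespace QLFAux

open QLF

variable (p : ℕ) [Fact p.Prime] {F : Type*} [Field F] [CharP F p]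
  {ι κ : Type*} [Fintype ι] [Fintype κ]

theorem eval_add (a : ι → F) (x y : ι → F) :
    eval p a (x + y) = eval p a x + eval p a y := by
  haveI : ExpChar F p := .prime Fact.out
  simp only [eval, Pi.add_apply]
  rw [← Finset.sum_add_distrib]
  exact Finset.sum_congr rfl fun i _ => by rw [add_pow_char, mul_add]

theorem eval_sub (a : ι → F) (x y : ι → F) :
    eval p a (x - y) = eval p a x - eval p a y := by
  simp only [eval, Pi.sub_apply]
  rw [← Finset.sum_sub_distrib]
  exact Finset.sum_congr rfl fun i _ => by rw [sub_pow_char, mul_sub]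

theorem eval_smul (a : ι → F) (c : F) (x : ι → F) :
    eval p a (c • x) = c ^ p * eval p a x := by
  simp only [eval, Pi.smul_apply, smul_eq_mul, Finset.mul_sum]
  exact Finset.sum_congr rfl fun i _ => by rw [mul_pow]; ring

theorem eval_zero (a : ι → F) : eval p a 0 = 0 := by
  have hp : p ≠ 0 := (Fact.out : p.Prime).ne_zero
  simp [eval, zero_pow hp]

theorem eval_injective {a : ι → F} (ha : Anisotropic p a) :
    Function.Injective (eval p a) := by
  intro x y hxy
  by_contra hne
  exact ha ⟨x - y, sub_ne_zero.mpr hne, by rw [eval_sub, hxy, sub_self]⟩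

theorem values_of_isometric {a : ι → F} {b : κ → F} (h : Isometric p a b) :
    values p a = values p b := by
  obtain ⟨T, hT⟩ := h
  ext v
  constructor
  · rintro ⟨x, rfl⟩; exact ⟨T x, (hT x).symm⟩
  · rintro ⟨y, rfl⟩; exact ⟨T.symm y, by rw [hT, T.apply_symm_apply]⟩

theorem eval_mul_left (c : F) (b : κ → F) (x : κ → F) :
    eval p (fun i => c * b i) x = c * eval p b x := by
  simp only [eval, Finset.mul_sum]; exact Finset.sum_congr rfl fun i _ => by ring

theorem values_mul_left (c : F) (b : κ → F) :
    values p (fun i => c * b i) = (fun v => c * v) '' values p b := by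
  ext v
  constructor
  · rintro ⟨x, rfl⟩; exact ⟨eval p b x, ⟨x, rfl⟩, (eval_mul_left p c b x).symm⟩
  · rintro ⟨w, ⟨x, rfl⟩, rfl⟩; exact ⟨x, eval_mul_left p c b x⟩

theorem anisotropic_mul_left {c : F} (hc : c ≠ 0) {b : κ → F} (hb : Anisotropic p b) :
    Anisotropic p (fun i => c * b i) := by
  rintro ⟨x, hx, hx0⟩
  rw [eval_mul_left] at hx0
  exact hb ⟨x, hx, (mul_eq_zero.mp hx0).resolve_left hc⟩

/-- Anisotropic forms with the same value set are isometric. -/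
theorem isometric_of_values {a : ι → F} {b : κ → F}
    (ha : Anisotropic p a) (hb : Anisotropic p b)
    (h : values p a = values p b) : Isometric p a b := by
  have hab : ∀ x, ∃ y, eval p b y = eval p a x := by
    intro x
    have : eval p a x ∈ values p b := h ▸ ⟨x, rfl⟩
    exact this
  have hba : ∀ y, ∃ x, eval p a x = eval p b y := by
    intro y
    have : eval p b y ∈ values p a := h ▸ ⟨y, rfl⟩
    exact this
  classical
  set T : (ι → F) → (κ → F) := fun x => (hab x).choose with hTdef
  have hT : ∀ x, eval p b (T x) = eval p a x := fun x => (hab x).choose_spec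
  set S : (κ → F) → (ι → F) := fun y => (hba y).choose with hSdef
  have hS : ∀ y, eval p a (S y) = eval p b y := fun y => (hba y).choose_spec
  have hbi := eval_injective p hb
  have hai := eval_injective p ha
  refine ⟨{ toFun := T
            map_add' := by
              intro x y
              apply hbi
              rw [hT, eval_add, ← hT x, ← hT y, ← eval_add]
            map_smul' := by
              intro c x
              apply hbi
              rw [hT, RingHom.id_apply, eval_smul, eval_smul, hT]
            invFun := S
            left_inv := by intro x; apply hai; rw [hS, hT]
            right_inv := by intro y; apply hbi; rw [hT, hS] }, fun x => (hT x).symm⟩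

end QLFAux

namespace QLFAux
open QLF
variable (p : ℕ) [Fact p.Prime] {F : Type*} [Field F] [CharP F p]
  {ι κ : Type*} [Fintype ι] [Fintype κ]

theorem values_tensor (π : ι → F) (b : κ → F) :
    values p (tensor p π b) =
      {v | ∃ l : κ → F, (∀ j, l j ∈ values p π) ∧ v = ∑ j, l j * b j} := by
  classical
  ext v
  constructor
  · rintro ⟨x, rfl⟩
    refine ⟨fun j => eval p π (fun e => x (e, j)), fun j => ⟨_, rfl⟩, ?_⟩
    simp only [eval, tensor]
    rw [Fintype.sum_prod_type]
    rw [Finset.sum_comm]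
    refine Finset.sum_congr rfl fun j _ => ?_
    rw [Finset.sum_mul]
    exact Finset.sum_congr rfl fun e _ => by ring
  · rintro ⟨l, hl, rfl⟩
    choose y hy using fun j => hl j
    refine ⟨fun ik => y ik.2 ik.1, ?_⟩
    simp only [eval, tensor]
    rw [Fintype.sum_prod_type]
    rw [Finset.sum_comm]
    refine Finset.sum_congr rfl fun j _ => ?_
    rw [← hy j]
    simp only [eval]
    rw [Finset.sum_mul]
    exact Finset.sum_congr rfl fun e _ => by ring

theorem image_values_tensor {K : Type*} [Field K] (f : F →+* K)
    (π : ι → F) (b : κ → F)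
    (hπ : f '' values p π = Set.range (fun x : K => x ^ p)) :
    f '' values p (tensor p π b) = values p (f ∘ b) := by
  classical
  rw [values_tensor]
  ext v
  constructor
  · rintro ⟨w, ⟨l, hl, rfl⟩, rfl⟩
    have : ∀ j, ∃ μ : K, μ ^ p = f (l j) := by
      intro j
      have : f (l j) ∈ Set.range (fun x : K => x ^ p) := hπ ▸ ⟨l j, hl j, rfl⟩
      obtain ⟨μ, hμ⟩ := this
      exact ⟨μ, hμ⟩
    choose μ hμ using this
    refine ⟨μ, ?_⟩
    simp only [eval, Function.comp_apply, map_sum, map_mul]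
    exact Finset.sum_congr rfl fun j _ => by rw [hμ j]; ring
  · rintro ⟨μ, rfl⟩
    have : ∀ j, ∃ l ∈ values p π, f l = μ j ^ p := by
      intro j
      have : μ j ^ p ∈ f '' values p π := hπ ▸ ⟨μ j, rfl⟩
      obtain ⟨l, hl, hfl⟩ := this
      exact ⟨l, hl, hfl⟩
    choose l hl hfl using this
    refine ⟨∑ j, l j * b j, ⟨l, hl, rfl⟩, ?_⟩
    simp only [eval, Function.comp_apply, map_sum, map_mul]
    exact Finset.sum_congr rfl fun j _ => by rw [hfl j]; ring

end QLFAux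

namespace QLFAux
open QLF

theorem key_field (p : ℕ) [Fact p.Prime] {F : Type*} [Field F] [CharP F p] {n : ℕ}
    (ac : Fin n → F) {K : Type*} [Field K] [CharP K p] (f : F →+* K)
    (α : Fin n → K) (hα : ∀ i, α i ^ p = f (ac i))
    (hgen : Subfield.closure (Set.range ⇑f ∪ Set.range α) = ⊤) :
    f '' values p (pfister p ac) = Set.range (fun x : K => x ^ p) := by
  classical
  have hp : p.Prime := Fact.out
  haveI : ExpChar K p := .prime hp
  haveI : NeZero p := ⟨hp.ne_zero⟩
  set M : (Fin n → Fin p) → K := fun e => ∏ i, α i ^ ((e i : ℕ)) with hM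
  set Sset : Set K := {x | ∃ y : (Fin n → Fin p) → F, x = ∑ e, f (y e) * M e} with hSset
  -- the key p-th power computation
  have hMp : ∀ e : Fin n → Fin p, M e ^ p = f (pfister p ac e) := by
    intro e
    rw [hM]
    simp only
    rw [← Finset.prod_pow]
    rw [pfister, map_prod]
    refine Finset.prod_congr rfl fun i _ => ?_
    rw [← pow_mul, mul_comm ((e i : ℕ)) p, pow_mul, hα, map_pow]
  have hkey : ∀ y : (Fin n → Fin p) → F,
      (∑ e, f (y e) * M e) ^ p = f (eval p (pfister p ac) y) := by
    intro y
    rw [sum_pow_char]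
    simp only [eval, map_sum, map_mul]
    refine Finset.sum_congr rfl fun e _ => ?_
    rw [mul_pow, hMp, ← map_pow]
    ring
  -- monomials are in Sset
  have mono_mem : ∀ (c : F) (e : Fin n → Fin p), f c * M e ∈ Sset := by
    intro c e
    refine ⟨fun e' => if e' = e then c else 0, ?_⟩
    simp [apply_ite f, ite_mul, Finset.sum_ite_eq']
  have hf_mem : ∀ c : F, f c ∈ Sset := by
    intro c
    have h0 : M 0 = 1 := by
      rw [hM]; simp
    have := mono_mem c 0
    rwa [h0, mul_one] at this
  have hone_mem : (1 : K) ∈ Sset := by simpa using hf_mem 1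
  have hα_mem : ∀ i, α i ∈ Sset := by
    intro i
    set e : Fin n → Fin p := fun j => if j = i then ⟨1, hp.one_lt⟩ else 0 with he
    have hMe : M e = α i := by
      rw [hM, he]
      simp only
      have : ∀ j, α j ^ (((if j = i then (⟨1, hp.one_lt⟩ : Fin p) else 0) : Fin p) : ℕ)
          = if j = i then α j else 1 := by
        intro j
        by_cases hj : j = i <;> simp [hj]
      simp only [this]
      simp [Finset.prod_ite_eq']
    have := mono_mem 1 e
    rwa [map_one, one_mul, hMe] at this
  have add_mem : ∀ x ∈ Sset, ∀ z ∈ Sset, x + z ∈ Sset := by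
    rintro x ⟨y, rfl⟩ z ⟨w, rfl⟩
    exact ⟨y + w, by simp [map_add, add_mul, Finset.sum_add_distrib]⟩
  have zero_mem : (0 : K) ∈ Sset := ⟨0, by simp⟩
  have neg_mem : ∀ x ∈ Sset, -x ∈ Sset := by
    rintro x ⟨y, rfl⟩
    exact ⟨-y, by simp [Finset.sum_neg_distrib, neg_mul]⟩
  have hMM : ∀ e e' : Fin n → Fin p, M e * M e' ∈ Sset := by
    intro e e'
    have : M e * M e' = f (∏ i, ac i ^ (((e i : ℕ) + (e' i : ℕ)) / p)) *
        M (fun i => ⟨((e i : ℕ) + (e' i : ℕ)) % p, Nat.mod_lt _ hp.pos⟩) := by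
      rw [hM]
      simp only
      rw [← Finset.prod_mul_distrib, map_prod, ← Finset.prod_mul_distrib]
      refine Finset.prod_congr rfl fun i _ => ?_
      rw [← pow_add, map_pow, ← hα, ← pow_mul, ← pow_add]
      congr 1
      exact (Nat.div_add_mod _ p).symm
    rw [this]
    exact mono_mem _ _
  have mul_mem : ∀ x ∈ Sset, ∀ z ∈ Sset, x * z ∈ Sset := by
    rintro x ⟨y, rfl⟩ z ⟨w, rfl⟩
    rw [Finset.sum_mul_sum]
    refine Finset.sum_induction _ (· ∈ Sset) (fun a b ha hb => add_mem a ha b hb) zero_mem fun e _ => ?_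
    refine Finset.sum_induction _ (· ∈ Sset) (fun a b ha hb => add_mem a ha b hb) zero_mem fun e' _ => ?_
    have : f (y e) * M e * (f (w e') * M e') = (f (y e) * f (w e')) * (M e * M e') := by ring
    rw [this, ← map_mul]
    obtain ⟨u, hu⟩ := hMM e e'
    rw [hu, Finset.mul_sum]
    refine Finset.sum_induction _ (· ∈ Sset) (fun a b ha hb => add_mem a ha b hb) zero_mem fun e'' _ => ?_
    have : f (y e * w e') * (f (u e'') * M e'') = f (y e * w e' * u e'') * M e'' := by
      simp only [map_mul]; ring
    rw [this]
    exact mono_mem _ _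
  have pow_mem : ∀ x ∈ Sset, ∀ k : ℕ, x ^ k ∈ Sset := by
    intro x hx k
    induction k with
    | zero => simpa using hone_mem
    | succ k ih => rw [pow_succ]; exact mul_mem _ ih _ hx
  have inv_mem : ∀ x ∈ Sset, x⁻¹ ∈ Sset := by
    intro x hx
    by_cases hx0 : x = 0
    · rw [hx0, inv_zero]; exact zero_mem
    · obtain ⟨y, rfl⟩ := hx
      set l := eval p (pfister p ac) y with hl
      have hxl : (∑ e, f (y e) * M e) ^ p = f l := hkey y
      have hl0 : l ≠ 0 := by
        intro h
        rw [h, map_zero] at hxl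
        exact pow_ne_zero p hx0 hxl
      have hinv : (∑ e, f (y e) * M e)⁻¹ = (∑ e, f (y e) * M e) ^ (p - 1) * f l⁻¹ := by
        refine inv_eq_of_mul_eq_one_right ?_
        rw [← mul_assoc]
        have : (∑ e, f (y e) * M e) * (∑ e, f (y e) * M e) ^ (p - 1)
            = (∑ e, f (y e) * M e) ^ p := by
          rw [← pow_succ']
          congr 1
          have := hp.pos
          omega
        rw [this, hxl, map_inv₀, mul_inv_cancel₀ (by rw [← hxl]; exact pow_ne_zero p hx0)]
      rw [hinv]
      exact mul_mem _ (pow_mem _ ⟨y, rfl⟩ _) _ (hf_mem _)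
  -- Sset is everything
  set Sf : Subfield K :=
    { carrier := Sset
      mul_mem' := fun ha hb => mul_mem _ ha _ hb
      one_mem' := hone_mem
      add_mem' := fun ha hb => add_mem _ ha _ hb
      zero_mem' := zero_mem
      neg_mem' := fun ha => neg_mem _ ha
      inv_mem' := inv_mem } with hSf
  have htop : ∀ x : K, x ∈ Sset := by
    intro x
    have hle : Subfield.closure (Set.range ⇑f ∪ Set.range α) ≤ Sf := by
      rw [Subfield.closure_le]
      rintro z (⟨c, rfl⟩ | ⟨i, rfl⟩)
      · exact hf_mem c
      · exact hα_mem i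
    rw [hgen] at hle
    exact hle (Subfield.mem_top x)
  -- conclude
  ext v
  constructor
  · rintro ⟨w, ⟨y, rfl⟩, rfl⟩
    exact ⟨∑ e, f (y e) * M e, hkey y⟩
  · rintro ⟨x, rfl⟩
    obtain ⟨y, rfl⟩ := htop x
    exact ⟨eval p (pfister p ac) y, ⟨y, rfl⟩, (hkey y).symm⟩

end QLFAux

/-- Let `π ≃ ⟪a₁,…,aₙ⟫` be an anisotropic quasi-Pfister form over `F`
and `K = F(α₁,…,αₙ)` with `αᵢᵖ = aᵢ`. If `φ ≃ π ⊗ φ′` and `ψ ≃ π ⊗ ψ′` are anisotropic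
over `F` and `φ′_K`, `ψ′_K` are similar over `K`, then `φ` and `ψ` are similar over `F`. -/
theorem stmt_11 (p : ℕ) [Fact p.Prime] {F : Type u} [Field F] [CharP F p]
    {n : ℕ} (ac : Fin n → F) (hac : ∀ i, ac i ≠ 0)
    (hπan : QLF.Anisotropic p (QLF.pfister p ac))
    (K : Type u) [Field K] [CharP K p] (f : F →+* K)
    (α : Fin n → K) (hα : ∀ i, α i ^ p = f (ac i))
    (hgen : Subfield.closure (Set.range ⇑f ∪ Set.range α) = ⊤)
    {N M uu vv : ℕ} (φ : Fin N → F) (ψ : Fin M → F) (φ' : Fin uu → F) (ψ' : Fin vv → F)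
    (hφ : QLF.Isometric p φ (QLF.tensor p (QLF.pfister p ac) φ'))
    (hψ : QLF.Isometric p ψ (QLF.tensor p (QLF.pfister p ac) ψ'))
    (hφan : QLF.Anisotropic p φ) (hψan : QLF.Anisotropic p ψ)
    (hsim : QLF.Similar p (f ∘ φ') (f ∘ ψ')) :
    QLF.Similar p φ ψ := by
  classical
  open QLF QLFAux in
  have hfi : Function.Injective ⇑f := f.injective
  have hkf := key_field p ac f α hα hgen
  have hDφ : f '' values p φ = values p (f ∘ φ') := by
    rw [values_of_isometric p hφ]
    exact image_values_tensor p f _ _ hkf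
  have hDψ : f '' values p ψ = values p (f ∘ ψ') := by
    rw [values_of_isometric p hψ]
    exact image_values_tensor p f _ _ hkf
  obtain ⟨c, hc, hiso⟩ := hsim
  have hmain : f '' values p φ = (fun v => c * v) '' (f '' values p ψ) := by
    rw [hDφ, hDψ, values_of_isometric p hiso, values_mul_left]
  by_cases hex : ∃ w ∈ values p ψ, w ≠ 0
  · obtain ⟨w, hw, hw0⟩ := hex
    have hcw : c * f w ∈ f '' values p φ := hmain ▸ ⟨f w, ⟨w, hw, rfl⟩, rfl⟩
    obtain ⟨u, hu, hfu⟩ := hcw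
    have hfw0 : f w ≠ 0 := fun h => hw0 (hfi (by rw [h, map_zero]))
    have hu0 : u ≠ 0 := by
      intro h
      rw [h, map_zero] at hfu
      exact (mul_ne_zero hc hfw0) hfu.symm
    have hd0 : u * w⁻¹ ≠ 0 := mul_ne_zero hu0 (inv_ne_zero hw0)
    have hfd : f (u * w⁻¹) = c := by
      rw [map_mul, map_inv₀, hfu]
      field_simp
    have hvals : values p φ = values p (fun i => (u * w⁻¹) * ψ i) := by
      apply Set.image_injective.mpr hfi
      rw [hmain, values_mul_left, Set.image_image, Set.image_image]
      refine Set.EqOn.image_eq ?_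
      intro v _
      simp only [map_mul, hfd]
    exact ⟨u * w⁻¹, hd0, isometric_of_values p hφan (anisotropic_mul_left p hd0 hψan) hvals⟩
  · push_neg at hex
    have hψ0 : values p ψ = {0} :=
      Set.eq_singleton_iff_unique_mem.mpr ⟨⟨0, eval_zero p ψ⟩, fun w hw => hex w hw⟩
    have hφ0 : values p φ = {0} := by
      refine Set.eq_singleton_iff_unique_mem.mpr ⟨⟨0, eval_zero p φ⟩, fun v hv => ?_⟩
      have : f v ∈ f '' values p φ := ⟨v, hv, rfl⟩
      rw [hmain, hψ0] at this
      simp only [Set.image_singleton, map_zero, mul_zero] at this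
      exact hfi (by simpa using this)
    have hvals : values p φ = values p (fun i => (1 : F) * ψ i) := by
      rw [values_mul_left, hψ0, hφ0, Set.image_singleton, mul_zero]
    exact ⟨1, one_ne_zero,
      isometric_of_values p hφan (anisotropic_mul_left p one_ne_zero hψan) hvals⟩
end

section
/- Let τ be a diagonal quasilinear p-form over F and let K/F be a field extension such that every p-th power of an element of K lies in the image of G_F(τ) under the embedding F → K. Let φ, ψ be diagonal quasilinear p-forms over F that are anisotropic over K and satisfy φ_K ≃ ψ_K. Then φ ⊗ τ ≃ ψ ⊗ τ over F. -/
/-!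
Diagonal quasilinear `p`-forms over a field `F` of characteristic `p`,
following Hoffmann and Zemková. A form of dimension `n` is recorded by its
coefficient tuple `a : ι → F` (for a finite index type `ι`), the form being
`x ↦ ∑ i, a i * (x i)^p`.
-/

universe u

section Aux

open QLF

/-- `F` viewed as an `F`-module via the Frobenius `x ↦ xᵖ`. -/
def Frob (p : ℕ) (F : Type*) : Type _ := F

/-- The identity map into the twisted module. -/
def Frob.of (p : ℕ) {F : Type*} : F → Frob p F := id

instance (p : ℕ) {F : Type*} [Field F] : AddCommGroup (Frob p F) :=
  inferInstanceAs (AddCommGroup F)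

noncomputable instance (p : ℕ) [Fact p.Prime] {F : Type*} [Field F] [CharP F p] :
    Module F (Frob p F) :=
  Module.compHom F (frobenius F p)

lemma Frob.of_add (p : ℕ) {F : Type*} [Field F] (x y : F) :
    Frob.of p (x + y) = Frob.of p x + Frob.of p y := rfl

lemma Frob.of_zero (p : ℕ) {F : Type*} [Field F] :
    Frob.of p (0 : F) = 0 := rfl

lemma Frob.of_sum (p : ℕ) {F : Type*} [Field F] {ι : Type*} (s : Finset ι) (g : ι → F) :
    Frob.of p (∑ i ∈ s, g i) = ∑ i ∈ s, Frob.of p (g i) :=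
  map_sum (AddMonoidHom.id F) g s

lemma Frob.smul_of (p : ℕ) [Fact p.Prime] {F : Type*} [Field F] [CharP F p] (c x : F) :
    c • Frob.of p x = Frob.of p (c ^ p * x) := rfl

lemma eval_single (p : ℕ) [Fact p.Prime] {F : Type*} [Field F] {ι : Type*} [Fintype ι]
    [DecidableEq ι] (a : ι → F) (i : ι) :
    QLF.eval p a (Pi.single i 1) = a i := by
  have hp0 : p ≠ 0 := (Fact.out : p.Prime).ne_zero
  simp [QLF.eval, Pi.single_apply, apply_ite (· ^ p), zero_pow hp0,
    Finset.sum_ite_eq']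

/-- The evaluation of a diagonal quasilinear form as an `F`-linear map into the
Frobenius-twisted module. -/
noncomputable def evalL (p : ℕ) [Fact p.Prime] {F : Type*} [Field F] [CharP F p]
    {ι : Type*} [Fintype ι] (a : ι → F) : (ι → F) →ₗ[F] Frob p F where
  toFun x := Frob.of p (QLF.eval p a x)
  map_add' x y := by
    show Frob.of p (QLF.eval p a (x + y)) = Frob.of p (QLF.eval p a x) + Frob.of p (QLF.eval p a y)
    have h : QLF.eval p a (x + y) = QLF.eval p a x + QLF.eval p a y := by
      simp only [QLF.eval, Pi.add_apply]
      rw [← Finset.sum_add_distrib]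
      exact Finset.sum_congr rfl fun i _ => by rw [add_pow_char, mul_add]
    rw [h, Frob.of_add]
  map_smul' c x := by
    show Frob.of p (QLF.eval p a (c • x)) = (RingHom.id F) c • Frob.of p (QLF.eval p a x)
    have h : QLF.eval p a (c • x) = c ^ p * QLF.eval p a x := by
      simp only [QLF.eval, Pi.smul_apply, smul_eq_mul, Finset.mul_sum]
      exact Finset.sum_congr rfl fun i _ => by rw [mul_pow]; ring
    rw [h]
    exact (Frob.smul_of p c (QLF.eval p a x)).symm

lemma evalL_apply (p : ℕ) [Fact p.Prime] {F : Type*} [Field F] [CharP F p]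
    {ι : Type*} [Fintype ι] (a : ι → F) (x : ι → F) :
    evalL p a x = Frob.of p (QLF.eval p a x) := rfl

lemma range_evalL (p : ℕ) [Fact p.Prime] {F : Type*} [Field F] [CharP F p]
    {ι : Type*} [Fintype ι] (a : ι → F) :
    LinearMap.range (evalL p a) =
      Submodule.span F (Set.range fun i => Frob.of p (a i)) := by
  classical
  apply le_antisymm
  · rintro _ ⟨x, rfl⟩
    have h : evalL p a x = ∑ i, x i • Frob.of p (a i) := by
      rw [evalL_apply]
      show Frob.of p (∑ i, a i * x i ^ p) = _
      rw [Frob.of_sum]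
      exact Finset.sum_congr rfl fun i _ => by
        rw [Frob.smul_of, mul_comm]
    rw [h]
    exact Submodule.sum_mem _ fun i _ =>
      Submodule.smul_mem _ _ (Submodule.subset_span ⟨i, rfl⟩)
  · rw [Submodule.span_le]
    rintro _ ⟨i, rfl⟩
    exact ⟨Pi.single i 1, by rw [evalL_apply, eval_single]⟩

/-- Two linear maps from equal-dimensional spaces with the same range differ by
a linear automorphism of the source. -/
theorem exists_linearEquiv_comp {F : Type*} [Field F]
    {U V W : Type*} [AddCommGroup U] [Module F U] [AddCommGroup V] [Module F V]
    [AddCommGroup W] [Module F W] [FiniteDimensional F U] [FiniteDimensional F V]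
    (La : U →ₗ[F] W) (Lb : V →ₗ[F] W)
    (hr : LinearMap.range La = LinearMap.range Lb)
    (hd : Module.finrank F U = Module.finrank F V) :
    ∃ T : U ≃ₗ[F] V, ∀ u, La u = Lb (T u) := by
  obtain ⟨Ca, hCa⟩ := Submodule.exists_isCompl (LinearMap.ker La)
  obtain ⟨Cb, hCb⟩ := Submodule.exists_isCompl (LinearMap.ker Lb)
  have hker : Module.finrank F (LinearMap.ker La) = Module.finrank F (LinearMap.ker Lb) := by
    have h1 := La.finrank_range_add_finrank_ker
    have h2 := Lb.finrank_range_add_finrank_ker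
    rw [hr] at h1
    omega
  let kiso : LinearMap.ker La ≃ₗ[F] LinearMap.ker Lb := LinearEquiv.ofFinrankEq _ _ hker
  let e : (U ⧸ LinearMap.ker La) ≃ₗ[F] (V ⧸ LinearMap.ker Lb) :=
    La.quotKerEquivRange.trans ((LinearEquiv.ofEq _ _ hr).trans Lb.quotKerEquivRange.symm)
  have he : ∀ x : U ⧸ LinearMap.ker La,
      (Lb.quotKerEquivRange (e x) : W) = (La.quotKerEquivRange x : W) := by
    intro x
    show (Lb.quotKerEquivRange (Lb.quotKerEquivRange.symm
      (LinearEquiv.ofEq _ _ hr (La.quotKerEquivRange x))) : W) = _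
    rw [Lb.quotKerEquivRange.apply_symm_apply]
    rfl
  let eC : Ca ≃ₗ[F] Cb :=
    ((Submodule.quotientEquivOfIsCompl _ _ hCa).symm.trans e).trans
      (Submodule.quotientEquivOfIsCompl _ _ hCb)
  refine ⟨((Submodule.prodEquivOfIsCompl _ _ hCa).symm.trans (kiso.prodCongr eC)).trans
      (Submodule.prodEquivOfIsCompl _ _ hCb), fun u => ?_⟩
  set kc := (Submodule.prodEquivOfIsCompl _ _ hCa).symm u with hkc
  have hu : u = (kc.1 : U) + (kc.2 : U) := by
    conv_lhs => rw [← (Submodule.prodEquivOfIsCompl _ _ hCa).apply_symm_apply u]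
    rfl
  have hTu : (((Submodule.prodEquivOfIsCompl _ _ hCa).symm.trans (kiso.prodCongr eC)).trans
      (Submodule.prodEquivOfIsCompl _ _ hCb)) u = (kiso kc.1 : V) + (eC kc.2 : V) := rfl
  rw [hTu, hu]
  rw [map_add, map_add]
  have h1 : La (kc.1 : U) = 0 := kc.1.2
  have h2 : Lb (kiso kc.1 : V) = 0 := (kiso kc.1).2
  rw [h1, h2, zero_add, zero_add]
  have hLb : ∀ v : V, Lb v = (Lb.quotKerEquivRange (Submodule.Quotient.mk v) : W) :=
    fun v => (Lb.quotKerEquivRange_apply_mk v).symm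
  have hLa : ∀ v : U, La v = (La.quotKerEquivRange (Submodule.Quotient.mk v) : W) :=
    fun v => (La.quotKerEquivRange_apply_mk v).symm
  rw [hLb, hLa]
  have hmk : (Submodule.Quotient.mk ((eC kc.2 : Cb) : V) : V ⧸ LinearMap.ker Lb) =
      e (Submodule.Quotient.mk (kc.2 : U)) := by
    show (Submodule.Quotient.mk ((Submodule.quotientEquivOfIsCompl _ _ hCb)
      (e ((Submodule.quotientEquivOfIsCompl _ _ hCa).symm kc.2)) : V) : V ⧸ LinearMap.ker Lb) = _
    rw [Submodule.mk_quotientEquivOfIsCompl_apply]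
    rfl
  rw [hmk, he]

end Aux

/-- Let `τ` be a quasilinear `p`-form over `F` and `K/F` a field
extension with `Kᵖ ⊆ G_F(τ)`. If `φ`, `ψ` over `F` are anisotropic over `K` and
`φ_K ≃ ψ_K`, then `φ ⊗ τ ≃ ψ ⊗ τ` over `F`. -/
theorem stmt_12 (p : ℕ) [Fact p.Prime] {F : Type u} [Field F] [CharP F p]
    {t : ℕ} (τ : Fin t → F)
    (K : Type u) [Field K] [CharP K p] (f : F →+* K)
    (hK : ∀ y : K, y ^ p ∈ f '' QLF.simFactors p τ)
    {n m : ℕ} (φ : Fin n → F) (ψ : Fin m → F)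
    (hφ : QLF.Anisotropic p (f ∘ φ)) (hψ : QLF.Anisotropic p (f ∘ ψ))
    (h : QLF.Isometric p (f ∘ φ) (f ∘ ψ)) :
    QLF.Isometric p (QLF.tensor p φ τ) (QLF.tensor p ψ τ) := by
  classical
  have hp0 : p ≠ 0 := (Fact.out : p.Prime).ne_zero
  obtain ⟨T, hT⟩ := h
  have hnm : n = m := by
    have := T.finrank_eq
    simpa using this
  have key : ∀ {n' m' : ℕ} (φ' : Fin n' → F) (ψ' : Fin m' → F)
      (T' : (Fin n' → K) ≃ₗ[K] (Fin m' → K)),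
      (∀ x, QLF.eval p (f ∘ φ') x = QLF.eval p (f ∘ ψ') (T' x)) →
      ∀ i, ∃ g : Fin m' → F, (∀ j, g j ∈ QLF.simFactors p τ) ∧
        φ' i = ∑ j, ψ' j * g j := by
    intro n' m' φ' ψ' T' hT' i
    choose g hg1 hg2 using fun j => hK (T' (Pi.single i 1) j)
    refine ⟨fun j => g j, fun j => hg1 j, ?_⟩
    apply f.injective
    have h1 : QLF.eval p (f ∘ φ') (Pi.single i 1) = f (φ' i) := eval_single p _ i
    have h2 : QLF.eval p (f ∘ ψ') (T' (Pi.single i 1)) =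
        ∑ j, f (ψ' j * g j) := by
      unfold QLF.eval
      refine Finset.sum_congr rfl fun j _ => ?_
      rw [map_mul, hg2 j, Function.comp_apply]
    rw [map_sum, ← h1, hT']
    exact h2
  have hφψ := key φ ψ T hT
  have hψφ := key ψ φ T.symm (fun x => by
    have := hT (T.symm x); simpa using this.symm)
  have hspan : ∀ {n' m' : ℕ} (φ' : Fin n' → F) (ψ' : Fin m' → F),
      (∀ i, ∃ g : Fin m' → F, (∀ j, g j ∈ QLF.simFactors p τ) ∧
        φ' i = ∑ j, ψ' j * g j) →
      LinearMap.range (evalL p (QLF.tensor p φ' τ)) ≤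
        LinearMap.range (evalL p (QLF.tensor p ψ' τ)) := by
    intro n' m' φ' ψ' hyp
    rw [range_evalL, range_evalL, Submodule.span_le]
    rintro _ ⟨⟨i, k⟩, rfl⟩
    show Frob.of p (QLF.tensor p φ' τ (i, k)) ∈
      (Submodule.span F (Set.range fun ik => Frob.of p (QLF.tensor p ψ' τ ik)) : Set (Frob p F))
    obtain ⟨g, hg, hsum⟩ := hyp i
    have h1 : QLF.tensor p φ' τ (i, k) = ∑ j, ψ' j * g j * τ k := by
      show φ' i * τ k = _
      rw [hsum, Finset.sum_mul]
    rw [h1, Frob.of_sum]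
    refine Submodule.sum_mem _ fun j _ => ?_
    rcases hg j with hj | hj
    · obtain ⟨-, S, hS⟩ := hj
      have hgτ : g j * τ k = ∑ l, τ l * (S (Pi.single k 1) l) ^ p := by
        have h3 := hS (Pi.single k 1)
        rw [eval_single p (fun i => g j * τ i) k] at h3
        exact h3
      have h4 : Frob.of p (ψ' j * g j * τ k) =
          ∑ l, (S (Pi.single k 1) l) • Frob.of p (QLF.tensor p ψ' τ (j, l)) := by
        have h5 : ψ' j * g j * τ k =
            ∑ l, (S (Pi.single k 1) l) ^ p * QLF.tensor p ψ' τ (j, l) := by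
          rw [mul_assoc, hgτ, Finset.mul_sum]
          refine Finset.sum_congr rfl fun l _ => ?_
          show ψ' j * (τ l * S (Pi.single k 1) l ^ p) =
            S (Pi.single k 1) l ^ p * (ψ' j * τ l)
          ring
        rw [h5, Frob.of_sum]
        exact Finset.sum_congr rfl fun l _ => (Frob.smul_of p _ _).symm
      rw [h4]
      exact Submodule.sum_mem _ fun l _ =>
        Submodule.smul_mem _ _ (Submodule.subset_span ⟨(j, l), rfl⟩)
    · have hj' : g j = 0 := hj
      have : ψ' j * g j * τ k = 0 := by rw [hj']; ring
      rw [this, Frob.of_zero]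
      exact Submodule.zero_mem _
  have hr : LinearMap.range (evalL p (QLF.tensor p φ τ)) =
      LinearMap.range (evalL p (QLF.tensor p ψ τ)) :=
    le_antisymm (hspan φ ψ hφψ) (hspan ψ φ hψφ)
  have hd : Module.finrank F (Fin n × Fin t → F) = Module.finrank F (Fin m × Fin t → F) := by
    subst hnm; rfl
  obtain ⟨T', hT'⟩ := exists_linearEquiv_comp
    (evalL p (QLF.tensor p φ τ)) (evalL p (QLF.tensor p ψ τ)) hr hd
  exact ⟨T', fun x => hT' x⟩
end

section
/- Let φ be an anisotropic diagonal quasilinear p-form over F of dimension at least 1, and let E be a subfield of F containing Fᵖ with the following property: for every a ∈ F×, if φ becomes isotropic over some field extension F(α)/F with αᵖ equal to the image of a, then a ∈ E. Then N_F(φ) ⊆ E. -/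
/-!
Diagonal quasilinear `p`-forms over a field `F` of characteristic `p`,
following Hoffmann and Zemková. A form of dimension `n` is recorded by its
coefficient tuple `a : ι → F` (for a finite index type `ι`), the form being
`x ↦ ∑ i, a i * (x i)^p`.
-/

universe u

/-- Let `φ` be an anisotropic quasilinear `p`-form of dimension ≥ 1
over `F` and `E` a subfield of `F` containing `Fᵖ` such that whenever `φ` becomes
isotropic over a field extension `F(α)/F` with `αᵖ = a ∈ F×`, one has `a ∈ E`.
Then `N_F(φ) ⊆ E`. -/
theorem stmt_14 (p : ℕ) [Fact p.Prime] {F : Type u} [Field F] [CharP F p]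
    {n : ℕ} (hn : 1 ≤ n) (φ : Fin n → F) (hφ : QLF.Anisotropic p φ)
    (E : Subfield F) (hE : ∀ x : F, x ^ p ∈ E)
    (h : ∀ a : F, a ≠ 0 →
      (∃ (K : Type u) (_ : Field K) (f : F →+* K) (α : K),
        α ^ p = f a ∧
        Subfield.closure (insert α (Set.range ⇑f)) = ⊤ ∧
        QLF.Isotropic p (f ∘ φ)) →
      a ∈ E) :
    QLF.normField p φ ≤ E := by
  have hp : p.Prime := Fact.out
  -- Key claim: every quotient of nonzero values of φ lies in E.
  have key : ∀ z : F, (∃ u ∈ QLF.values p φ, ∃ v ∈ QLF.values p φ,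
      u ≠ 0 ∧ v ≠ 0 ∧ z = u / v) → z ∈ E := by
    rintro z ⟨u, hu, v, hv, hu0, hv0, rfl⟩
    set a := u / v with ha
    have ha0 : a ≠ 0 := div_ne_zero hu0 hv0
    by_cases hpow : ∃ c : F, c ^ p = a
    · obtain ⟨c, hc⟩ := hpow; exact hc ▸ hE c
    push_neg at hpow
    apply h a ha0
    have hirr : Irreducible (Polynomial.X ^ p - Polynomial.C a) :=
      X_pow_sub_C_irreducible_of_prime hp hpow
    haveI : Fact (Irreducible (Polynomial.X ^ p - Polynomial.C a)) := ⟨hirr⟩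
    set K := AdjoinRoot (Polynomial.X ^ p - Polynomial.C a) with hK
    let f : F →+* K := algebraMap F K
    let α : K := AdjoinRoot.root _
    haveI : CharP K p := charP_of_injective_ringHom f.injective p
    have hαp : α ^ p = f a := root_X_pow_sub_C_pow p a
    have hαnot : α ∉ Set.range ⇑f := by
      rintro ⟨c, hc⟩
      exact hpow c (f.injective (by rw [← hαp, ← hc, map_pow]))
    refine ⟨K, inferInstance, f, α, hαp, ?_, ?_⟩
    · -- generation
      rw [eq_top_iff]
      intro k _
      have h2 := Algebra.adjoin_eq_ring_closure (R := F) (A := K) ({α} : Set K)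
      rw [AdjoinRoot.adjoinRoot_eq_top, Algebra.top_toSubring] at h2
      have hk : k ∈ Subring.closure (Set.range ⇑f ∪ {α}) := by rw [← h2]; trivial
      have hle : Subring.closure (Set.range ⇑f ∪ {α}) ≤
          (Subfield.closure (insert α (Set.range ⇑f))).toSubring :=
        Subring.closure_le.2 (by
          rw [Set.union_comm, ← Set.insert_eq]
          exact Subfield.subset_closure)
      exact hle hk
    · -- isotropy
      obtain ⟨x, hx⟩ := hu
      obtain ⟨y, hy⟩ := hv
      have hyne : y ≠ 0 := by
        rintro rfl
        apply hv0
        rw [← hy]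
        simp [QLF.eval, zero_pow hp.ne_zero]
      refine ⟨fun i => f (x i) - α * f (y i), ?_, ?_⟩
      · intro hzero
        obtain ⟨j, hj⟩ := Function.ne_iff.1 hyne
        simp only [Pi.zero_apply] at hj
        have hj' : f (x j) - α * f (y j) = 0 := congrFun hzero j
        apply hαnot
        refine ⟨x j / y j, ?_⟩
        have hyj : f (y j) ≠ 0 := fun hc => hj (f.injective (by rw [hc, map_zero]))
        rw [map_div₀, div_eq_iff hyj, mul_comm]
        linear_combination hj'
      · have : ∀ i : Fin n, (f ∘ φ) i * (f (x i) - α * f (y i)) ^ p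
            = f (φ i * x i ^ p) - α ^ p * f (φ i * y i ^ p) := by
          intro i
          simp only [Function.comp_apply]
          rw [sub_pow_char, mul_pow, map_mul, map_mul, map_pow, map_pow]
          ring
        rw [QLF.eval, Finset.sum_congr rfl fun i _ => this i,
          Finset.sum_sub_distrib, ← map_sum, ← Finset.mul_sum, ← map_sum, hαp]
        have hxu : (∑ i, φ i * x i ^ p) = u := hx
        have hyv : (∑ i, φ i * y i ^ p) = v := hy
        rw [hxu, hyv, ← map_mul, ← map_sub]
        have : u - a * v = 0 := by
          rw [ha, div_mul_cancel₀ _ hv0, sub_self]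
        rw [this, map_zero]
  -- conclude
  rw [QLF.normField, QLF.adjoin]
  apply Subfield.closure_le.2
  rintro z (hz | hz)
  · obtain ⟨c, rfl⟩ := hz; exact hE c
  · exact key z hz
end

section
/- Let φ be either an anisotropic quasi-Pfister form or an anisotropic quasi-Pfister neighbor over F, and let x ∈ F×. Then φ ⊗ ⟨1, x, x², …, x^{p−1}⟩ is isotropic over F if and only if x ∈ N_F(φ). -/
/-!
Diagonal quasilinear `p`-forms over a field `F` of characteristic `p`,
following Hoffmann and Zemková. A form of dimension `n` is recorded by its
coefficient tuple `a : ι → F` (for a finite index type `ι`), the form being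
`x ↦ ∑ i, a i * (x i)^p`.
-/

universe u

section Stmt15Aux

open QLF

namespace Stmt15Aux

variable (p : ℕ) [Fact p.Prime] {F : Type*} [Field F] [CharP F p]

theorem eval_zero {ι : Type*} [Fintype ι] (a : ι → F) : eval p a 0 = 0 := by
  simp [eval, zero_pow (Fact.out : p.Prime).ne_zero]

theorem eval_add {ι : Type*} [Fintype ι] (a x y : ι → F) :
    eval p a (x + y) = eval p a x + eval p a y := by
  haveI : ExpChar F p := .prime Fact.out
  simp only [eval, Pi.add_apply]
  rw [← Finset.sum_add_distrib]
  exact Finset.sum_congr rfl fun i _ => by rw [add_pow_char, mul_add]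

theorem eval_smul {ι : Type*} [Fintype ι] (a : ι → F) (c : F) (x : ι → F) :
    eval p a (c • x) = c ^ p * eval p a x := by
  simp only [eval, Pi.smul_apply, smul_eq_mul, Finset.mul_sum, mul_pow]
  exact Finset.sum_congr rfl fun i _ => by ring

theorem eval_mul_left {ι : Type*} [Fintype ι] (c : F) (a : ι → F) (x : ι → F) :
    eval p (fun i => c * a i) x = c * eval p a x := by
  simp only [eval, Finset.mul_sum]
  exact Finset.sum_congr rfl fun i _ => by ring

theorem zero_mem_values {ι : Type*} [Fintype ι] (a : ι → F) : (0 : F) ∈ values p a :=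
  ⟨0, eval_zero p a⟩

theorem add_mem_values {ι : Type*} [Fintype ι] {a : ι → F} {u v : F}
    (hu : u ∈ values p a) (hv : v ∈ values p a) : u + v ∈ values p a := by
  obtain ⟨y, hy⟩ := hu; obtain ⟨z, hz⟩ := hv
  exact ⟨y + z, by rw [eval_add, hy, hz]⟩

theorem pow_mul_mem_values {ι : Type*} [Fintype ι] {a : ι → F} (t : F) {u : F}
    (hu : u ∈ values p a) : t ^ p * u ∈ values p a := by
  obtain ⟨y, hy⟩ := hu
  exact ⟨t • y, by rw [eval_smul, hy]⟩

theorem neg_mem_values {ι : Type*} [Fintype ι] {a : ι → F} {u : F}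
    (hu : u ∈ values p a) : -u ∈ values p a := by
  haveI : ExpChar F p := .prime Fact.out
  have h : ((-1 : F)) ^ p = -1 := by
    have := map_neg (frobenius F p) 1
    rwa [map_one, frobenius_def] at this
  have := pow_mul_mem_values p (-1 : F) hu
  rwa [h, neg_one_mul] at this

theorem coeff_mem_values {ι : Type*} [Fintype ι] [DecidableEq ι] (a : ι → F) (i : ι) :
    a i ∈ values p a := by
  refine ⟨Pi.single i 1, ?_⟩
  have hp := (Fact.out : p.Prime).ne_zero
  simp only [eval, Pi.single_apply]
  rw [Finset.sum_eq_single i]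
  · simp
  · intro j _ hj
    simp [hj, zero_pow hp]
  · simp

theorem aniso_eval_eq_zero {ι : Type*} [Fintype ι] {a : ι → F} (h : Anisotropic p a)
    {y : ι → F} (hy : eval p a y = 0) : y = 0 := by
  by_contra hne
  exact h ⟨y, hne, hy⟩

/-- Characterization of isotropy of `a ⊗ c` for anisotropic `a`. -/
theorem isotropic_tensor_iff {ι κ : Type*} [Fintype ι] [Fintype κ] (a : ι → F)
    (han : Anisotropic p a) (c : κ → F) :
    Isotropic p (tensor p a c) ↔
      ∃ v : κ → F, (∀ j, v j ∈ values p a) ∧ v ≠ 0 ∧ ∑ j, c j * v j = 0 := by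
  have hev : ∀ z : ι × κ → F,
      eval p (tensor p a c) z = ∑ k, c k * eval p a (fun i => z (i, k)) := by
    intro z
    rw [eval, Fintype.sum_prod_type_right]
    refine Finset.sum_congr rfl fun k _ => ?_
    rw [eval, Finset.mul_sum]
    exact Finset.sum_congr rfl fun i _ => by simp only [tensor]; ring
  constructor
  · rintro ⟨z, hz0, hz⟩
    refine ⟨fun k => eval p a (fun i => z (i, k)), fun k => ⟨_, rfl⟩, ?_, by
      rw [← hev z, hz]⟩
    intro hv
    apply hz0
    funext ik
    have h1 : eval p a (fun i => z (i, ik.2)) = 0 := congrFun hv ik.2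
    have h2 := aniso_eval_eq_zero p han h1
    exact congrFun h2 ik.1
  · rintro ⟨v, hval, hvne, hsum⟩
    choose y hy using hval
    refine ⟨fun ik => y ik.2 ik.1, ?_, ?_⟩
    · have hex : ∃ k, v k ≠ 0 := by
        by_contra hcon
        push_neg at hcon
        exact hvne (funext hcon)
      obtain ⟨k, hk⟩ := hex
      have hyk : y k ≠ 0 := by
        intro h0
        apply hk
        rw [← hy k, h0, eval_zero]
      have hex2 : ∃ i, y k i ≠ 0 := by
        by_contra hcon
        push_neg at hcon
        exact hyk (funext hcon)
      obtain ⟨i, hi⟩ := hex2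
      intro h0
      have h1 : y k i = 0 := congrFun h0 (i, k)
      exact hi h1
    · rw [hev]
      have : ∀ k, eval p a (fun i => y k i) = v k := fun k => hy k
      simp only [this]
      exact hsum


theorem one_mem_values_pfister {m : ℕ} (b : Fin m → F) :
    (1 : F) ∈ values p (pfister p b) := by
  classical
  haveI : NeZero p := ⟨(Fact.out : p.Prime).ne_zero⟩
  have h := coeff_mem_values p (pfister p b) (0 : Fin m → Fin p)
  have h0 : pfister p b 0 = 1 := by
    simp [pfister]
  rwa [h0] at h

theorem mul_mem_values_pfister {m : ℕ} (b : Fin m → F) {u v : F}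
    (hu : u ∈ values p (pfister p b)) (hv : v ∈ values p (pfister p b)) :
    u * v ∈ values p (pfister p b) := by
  classical
  haveI : ExpChar F p := .prime Fact.out
  have hppos : 0 < p := (Fact.out : p.Prime).pos
  obtain ⟨y, hy⟩ := hu
  obtain ⟨z, hz⟩ := hv
  set q : ((Fin m → Fin p) × (Fin m → Fin p)) → Fin m → ℕ :=
    fun ef i => (ef.1 i : ℕ) + (ef.2 i : ℕ) with hq
  set g : ((Fin m → Fin p) × (Fin m → Fin p)) → (Fin m → Fin p) :=
    fun ef i => ⟨q ef i % p, Nat.mod_lt _ hppos⟩ with hg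
  set r : ((Fin m → Fin p) × (Fin m → Fin p)) → F :=
    fun ef => ∏ i, b i ^ (q ef i / p) with hr
  have key : ∀ ef, pfister p b (g ef) * r ef ^ p
      = pfister p b ef.1 * pfister p b ef.2 := by
    intro ef
    simp only [pfister, hr, hg]
    rw [← Finset.prod_pow, ← Finset.prod_mul_distrib, ← Finset.prod_mul_distrib]
    refine Finset.prod_congr rfl fun i _ => ?_
    rw [← pow_mul, ← pow_add, ← pow_add]
    congr 1
    show q ef i % p + q ef i / p * p = (ef.1 i : ℕ) + (ef.2 i : ℕ)
    rw [Nat.mod_add_div']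
  refine ⟨fun gg => ∑ ef ∈ Finset.univ.filter
      (fun ef : (Fin m → Fin p) × (Fin m → Fin p) => g ef = gg),
      r ef * y ef.1 * z ef.2, ?_⟩
  have step1 : eval p (pfister p b)
      (fun gg => ∑ ef ∈ Finset.univ.filter
        (fun ef : (Fin m → Fin p) × (Fin m → Fin p) => g ef = gg),
        r ef * y ef.1 * z ef.2)
      = ∑ ef : (Fin m → Fin p) × (Fin m → Fin p),
          pfister p b (g ef) * (r ef * y ef.1 * z ef.2) ^ p := by
    rw [← Finset.sum_fiberwise Finset.univ g
      (fun ef => pfister p b (g ef) * (r ef * y ef.1 * z ef.2) ^ p)]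
    simp only [eval]
    refine Finset.sum_congr rfl fun gg _ => ?_
    rw [sum_pow_char, Finset.mul_sum]
    refine Finset.sum_congr rfl fun ef hef => ?_
    rw [(Finset.mem_filter.mp hef).2]
  rw [step1, ← hy, ← hz]
  have step2 : ∀ ef : (Fin m → Fin p) × (Fin m → Fin p),
      pfister p b (g ef) * (r ef * y ef.1 * z ef.2) ^ p
      = (pfister p b ef.1 * y ef.1 ^ p) * (pfister p b ef.2 * z ef.2 ^ p) := by
    intro ef
    have := key ef
    rw [mul_pow, mul_pow]
    calc pfister p b (g ef) * (r ef ^ p * y ef.1 ^ p * z ef.2 ^ p)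
        = (pfister p b (g ef) * r ef ^ p) * (y ef.1 ^ p * z ef.2 ^ p) := by ring
      _ = (pfister p b ef.1 * pfister p b ef.2) * (y ef.1 ^ p * z ef.2 ^ p) := by rw [this]
      _ = (pfister p b ef.1 * y ef.1 ^ p) * (pfister p b ef.2 * z ef.2 ^ p) := by ring
  rw [Finset.sum_congr rfl fun ef _ => step2 ef]
  rw [eval, eval, Finset.sum_mul_sum]
  rw [Fintype.sum_prod_type]

theorem pow_mem_values_pfister {m : ℕ} (b : Fin m → F) {u : F}
    (hu : u ∈ values p (pfister p b)) (j : ℕ) :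
    u ^ j ∈ values p (pfister p b) := by
  induction j with
  | zero => simpa using one_mem_values_pfister p b
  | succ j ih =>
    rw [pow_succ]
    exact mul_mem_values_pfister p b ih hu

theorem pSet_subset_values_pfister {m : ℕ} (b : Fin m → F) :
    pSet p F ⊆ values p (pfister p b) := by
  rintro _ ⟨t, rfl⟩
  have := pow_mul_mem_values p t (one_mem_values_pfister p b)
  rwa [mul_one] at this

/-- The value set of a quasi-Pfister form is a subfield of `F`. -/
def KF {m : ℕ} (b : Fin m → F) : Subfield F where
  carrier := values p (pfister p b)
  mul_mem' := mul_mem_values_pfister p b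
  one_mem' := one_mem_values_pfister p b
  add_mem' := add_mem_values p
  zero_mem' := zero_mem_values p _
  neg_mem' := neg_mem_values p
  inv_mem' := by
    intro u hu
    rcases eq_or_ne u 0 with rfl | hune
    · simpa using zero_mem_values p (pfister p b)
    · have h1 : u ^ (p - 1) ∈ values p (pfister p b) := pow_mem_values_pfister p b hu _
      have h2 : (u⁻¹) ^ p * u ^ (p - 1) ∈ values p (pfister p b) := pow_mul_mem_values p _ h1
      have h3 : (u⁻¹) ^ p * u ^ (p - 1) = u⁻¹ := by
        have hp1 : p - 1 + 1 = p := Nat.succ_pred_eq_of_pos (Fact.out : p.Prime).pos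
        rw [inv_pow, ← hp1, pow_succ, mul_inv]
        field_simp
        rw [Nat.add_sub_cancel]
      rwa [h3] at h2

theorem mem_KF {m : ℕ} (b : Fin m → F) (u : F) :
    u ∈ KF p b ↔ u ∈ values p (pfister p b) := Iff.rfl


/-- The subfield of `p`-th powers. -/
def pfld (F : Type*) [Field F] [CharP F p] : Subfield F :=
  letI : ExpChar F p := .prime Fact.out
  (frobenius F p).fieldRange

theorem mem_pfld {F : Type*} [Field F] [CharP F p] (u : F) :
    u ∈ pfld p F ↔ ∃ t : F, t ^ p = u := by
  letI : ExpChar F p := .prime Fact.out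
  constructor
  · rintro ⟨t, rfl⟩
    exact ⟨t, (frobenius_def p t).symm⟩
  · rintro ⟨t, rfl⟩
    exact ⟨t, frobenius_def p t⟩

theorem smul_pfld (g : pfld p F) (u : F) : g • u = (g : F) * u := by
  rw [Subfield.smul_def, smul_eq_mul]

theorem values_eq_span {ι : Type*} [Fintype ι] (a : ι → F) :
    values p a = ↑(Submodule.span (pfld p F) (Set.range a)) := by
  ext u
  constructor
  · rintro ⟨y, rfl⟩
    rw [SetLike.mem_coe]
    have : eval p a y
        = ∑ i, (⟨y i ^ p, (mem_pfld p _).mpr ⟨y i, rfl⟩⟩ : pfld p F) • a i := by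
      rw [eval]
      exact Finset.sum_congr rfl fun i _ => by rw [smul_pfld]; ring
    rw [this]
    exact Submodule.sum_mem _ fun i _ =>
      Submodule.smul_mem _ _ (Submodule.subset_span ⟨i, rfl⟩)
  · intro hu
    rw [SetLike.mem_coe, Submodule.mem_span_range_iff_exists_fun] at hu
    obtain ⟨g, hg⟩ := hu
    have hgt : ∀ i, ∃ t : F, t ^ p = (g i : F) := fun i => (mem_pfld p _).mp (g i).2
    choose t ht using hgt
    refine ⟨t, ?_⟩
    rw [← hg, eval]
    exact Finset.sum_congr rfl fun i _ => by rw [smul_pfld, ← ht i]; ring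


theorem linindep_of_aniso {ι : Type*} [Fintype ι] {a : ι → F} (han : Anisotropic p a) :
    LinearIndependent (pfld p F) a := by
  rw [Fintype.linearIndependent_iff]
  intro g hg
  have hgt : ∀ i, ∃ t : F, t ^ p = (g i : F) := fun i => (mem_pfld p _).mp (g i).2
  choose t ht using hgt
  have heval : eval p a t = 0 := by
    rw [eval, ← hg]
    exact Finset.sum_congr rfl fun i _ => by rw [smul_pfld, ← ht i]; ring
  have hz := aniso_eval_eq_zero p han heval
  intro i
  have hti : t i = 0 := congrFun hz i
  apply Subtype.ext
  rw [← ht i, hti]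
  simp [zero_pow (Fact.out : p.Prime).ne_zero]

set_option maxHeartbeats 1000000 in
set_option synthInstance.maxHeartbeats 400000 in
theorem rel_of_mem_KF {n m : ℕ} (φ : Fin n → F) (hφan : Anisotropic p φ)
    (b : Fin m → F) (c : F) (hc : c ≠ 0)
    (hcoef : ∀ i, c * φ i ∈ values p (pfister p b))
    (hdim : p ^ m < p * n)
    {x : F} (hxK : x ∈ values p (pfister p b)) :
    ∃ v : Fin p → F, (∀ j, v j ∈ values p φ) ∧ v ≠ 0 ∧
      ∑ j : Fin p, x ^ (j : ℕ) * v j = 0 := by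
  classical
  have hV : values p (fun i => c * φ i)
      = ↑(Submodule.span (pfld p F) (Set.range fun i => c * φ i)) := values_eq_span p _
  have hK : values p (pfister p b)
      = ↑(Submodule.span (pfld p F) (Set.range (pfister p b))) := values_eq_span p _
  set V : Submodule (pfld p F) F := Submodule.span (pfld p F) (Set.range fun i => c * φ i)
  set KM : Submodule (pfld p F) F := Submodule.span (pfld p F) (Set.range (pfister p b))
  haveI : FiniteDimensional (pfld p F) V :=
    FiniteDimensional.span_of_finite _ (Set.finite_range _)
  haveI : FiniteDimensional (pfld p F) KM :=
    FiniteDimensional.span_of_finite _ (Set.finite_range _)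
  have haniso2 : Anisotropic p (fun i => c * φ i) := by
    rintro ⟨y, hy0, hy⟩
    rw [eval_mul_left] at hy
    rcases mul_eq_zero.mp hy with h | h
    · exact hc h
    · exact hφan ⟨y, hy0, h⟩
  have hli : LinearIndependent (pfld p F) (fun i => c * φ i) := linindep_of_aniso p haniso2
  have hrV : Module.finrank (pfld p F) V = n := by
    rw [finrank_span_eq_card hli, Fintype.card_fin]
  have hrKM : Module.finrank (pfld p F) KM ≤ p ^ m := by
    have h1 := finrank_range_le_card (R := pfld p F) (pfister p b)
    rw [Set.finrank] at h1
    calc Module.finrank (pfld p F) KM ≤ Fintype.card (Fin m → Fin p) := h1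
      _ = p ^ m := by rw [Fintype.card_fun, Fintype.card_fin, Fintype.card_fin]
  have hVval : ∀ u : F, u ∈ V → u ∈ values p (pfister p b) := by
    intro u hu
    have h1 : V ≤ KM := by
      apply Submodule.span_le.mpr
      rintro _ ⟨i, rfl⟩
      show c * φ i ∈ (KM : Set F)
      rw [← hK]
      exact hcoef i
    rw [hK]
    exact h1 hu
  have hxj : ∀ j : ℕ, x ^ j ∈ values p (pfister p b) :=
    fun j => pow_mem_values_pfister p b hxK j
  let bigPhi : (Fin p → V) →ₗ[pfld p F] F :=
    { toFun := fun w => ∑ j : Fin p, x ^ (j : ℕ) * (w j : F)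
      map_add' := by
        intro w w'
        rw [← Finset.sum_add_distrib]
        exact Finset.sum_congr rfl fun j _ => by
          simp only [Pi.add_apply, Submodule.coe_add]; ring
      map_smul' := by
        intro g w
        simp only [RingHom.id_apply]
        rw [smul_pfld, Finset.mul_sum]
        refine Finset.sum_congr rfl fun j _ => ?_
        simp only [Pi.smul_apply, Submodule.coe_smul]
        rw [smul_pfld]
        ring }
  have hrange : ∀ w : Fin p → V, bigPhi w ∈ KM := by
    intro w
    have h1 : ∑ j : Fin p, x ^ (j : ℕ) * (w j : F) ∈ KF p b :=
      Subfield.sum_mem _ fun j _ =>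
        mul_mem_values_pfister p b (hxj (j : ℕ)) (hVval _ (w j).2)
    have h2 : ∑ j : Fin p, x ^ (j : ℕ) * (w j : F) ∈ values p (pfister p b) := h1
    rw [hK] at h2
    exact h2
  let Phi : (Fin p → V) →ₗ[pfld p F] KM := bigPhi.codRestrict KM hrange
  have hnotinj : ¬ Function.Injective Phi := by
    intro hinj
    have h1 := LinearMap.finrank_le_finrank_of_injective hinj
    have h2 : Module.finrank (pfld p F) (Fin p → V) = p * n := by
      rw [Module.finrank_pi_fintype, Finset.sum_const, Finset.card_univ, Fintype.card_fin, smul_eq_mul, hrV]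
    rw [h2] at h1
    omega
  have hker : LinearMap.ker Phi ≠ ⊥ := by
    intro h
    exact hnotinj (LinearMap.ker_eq_bot.mp h)
  obtain ⟨w, hwker, hwne⟩ := (Submodule.ne_bot_iff _).mp hker
  have hwsum : ∑ j : Fin p, x ^ (j : ℕ) * ((w j : F)) = 0 := by
    rw [LinearMap.mem_ker] at hwker
    have h1 : bigPhi w = ((Phi w : KM) : F) := rfl
    rw [hwker] at h1
    exact h1.trans rfl
  refine ⟨fun j => c⁻¹ * (w j : F), ?_, ?_, ?_⟩
  · intro j
    have h1 : ((w j : F)) ∈ values p (fun i => c * φ i) := by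
      rw [hV]
      exact SetLike.coe_mem (w j)
    obtain ⟨y, hy⟩ := h1
    rw [eval_mul_left] at hy
    refine ⟨y, ?_⟩
    have h2 : c⁻¹ * (c * eval p φ y) = eval p φ y := by field_simp
    rw [← h2, hy]
  · intro h0
    apply hwne
    funext j
    have h1 : c⁻¹ * (w j : F) = 0 := congrFun h0 j
    rcases mul_eq_zero.mp h1 with h | h
    · exact absurd h (inv_ne_zero hc)
    · exact Subtype.ext h
  · calc ∑ j : Fin p, x ^ (j : ℕ) * (c⁻¹ * (w j : F))
        = c⁻¹ * ∑ j : Fin p, x ^ (j : ℕ) * (w j : F) := by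
          rw [Finset.mul_sum]
          exact Finset.sum_congr rfl fun j _ => by ring
      _ = 0 := by rw [hwsum, mul_zero]


theorem pSet_mem_normField {ι : Type*} [Fintype ι] (a : ι → F) {u : F}
    (hu : u ∈ pSet p F) : u ∈ normField p a :=
  Subfield.subset_closure (Set.mem_union_left _ hu)

open Polynomial in
set_option maxHeartbeats 1000000 in
theorem mem_normField_of_rel {ι : Type*} [Fintype ι] (a : ι → F) {x : F}
    (v : Fin p → F) (hval : ∀ j, v j ∈ values p a) {l : Fin p} (hl : v l ≠ 0)
    (hsum : ∑ j : Fin p, x ^ (j : ℕ) * v j = 0) : x ∈ normField p a := by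
  classical
  have hp2 := (Fact.out : p.Prime).two_le
  set N := normField p a with hNdef
  have hxp : x ^ p ∈ N := pSet_mem_normField p a ⟨x, rfl⟩
  have hN : ∀ j, v j / v l ∈ N := by
    intro j
    rcases eq_or_ne (v j) 0 with h | h
    · rw [h, zero_div]
      exact N.zero_mem
    · exact Subfield.subset_closure
        (Set.mem_union_right _ ⟨v j, hval j, v l, hval l, h, hl, rfl⟩)
  set xp : N := ⟨x ^ p, hxp⟩
  have halg : ∀ y : N, algebraMap N F y = (y : F) := fun _ => rfl
  have hint : IsIntegral N x := by
    refine ⟨X ^ p - C xp, monic_X_pow_sub_C _ (Fact.out : p.Prime).ne_zero, ?_⟩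
    rw [← aeval_def, map_sub, map_pow, aeval_X, aeval_C, halg]
    exact sub_self _
  set w : Fin p → N := fun j => ⟨v j / v l, hN j⟩ with hwdef
  set f : Polynomial N := ∑ j : Fin p, C (w j) * X ^ (j : ℕ) with hfdef
  have hcoeff : ∀ l' : Fin p, f.coeff (l' : ℕ) = w l' := by
    intro l'
    rw [hfdef, finset_sum_coeff]
    rw [Finset.sum_eq_single l']
    · rw [coeff_C_mul, coeff_X_pow, if_pos rfl, mul_one]
    · intro j _ hj
      have hne : (j : ℕ) ≠ (l' : ℕ) := fun h => hj (Fin.ext h)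
      rw [coeff_C_mul, coeff_X_pow, if_neg (Ne.symm hne), mul_zero]
    · intro h
      exact absurd (Finset.mem_univ l') h
  have hwl : (w l : F) = 1 := div_self hl
  have hf0 : f ≠ 0 := by
    intro h
    have h2 := hcoeff l
    rw [h, coeff_zero] at h2
    have h3 : (0 : F) = 1 := by rw [← hwl, ← h2]; rfl
    exact zero_ne_one h3
  have hfx : aeval x f = 0 := by
    rw [hfdef, map_sum]
    have h1 : ∀ j : Fin p, aeval x (C (w j) * X ^ (j : ℕ)) = v j / v l * x ^ (j : ℕ) := by
      intro j
      rw [map_mul, aeval_C, map_pow, aeval_X, halg]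
    rw [Finset.sum_congr rfl fun j _ => h1 j]
    have h2 : ∑ j : Fin p, v j / v l * x ^ (j : ℕ)
        = (∑ j : Fin p, x ^ (j : ℕ) * v j) / v l := by
      rw [Finset.sum_div]
      exact Finset.sum_congr rfl fun j _ => by ring
    rw [h2, hsum, zero_div]
  have hdegf : f.natDegree ≤ p - 1 := by
    rw [hfdef]
    refine natDegree_sum_le_of_forall_le _ _ fun j _ => ?_
    exact (natDegree_C_mul_X_pow_le _ _).trans (Nat.le_pred_of_lt j.isLt)
  have hmdvdf : minpoly N x ∣ f := minpoly.dvd N x hfx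
  have hmdeg : (minpoly N x).natDegree ≤ p - 1 :=
    (natDegree_le_of_dvd hmdvdf hf0).trans hdegf
  have hmpos : 0 < (minpoly N x).natDegree := minpoly.natDegree_pos hint
  have hmdvdg : minpoly N x ∣ (X ^ p - C xp) :=
    minpoly.dvd N x (by rw [map_sub, map_pow, aeval_X, aeval_C, halg]; exact sub_self _)
  have hXp : (X - C x) ^ p = X ^ p - C (x ^ p) := by
    rw [sub_pow_char, ← C_pow]
  have hmapdvd : (minpoly N x).map (algebraMap N F) ∣ (X - C x) ^ p := by
    have h1 := Polynomial.map_dvd (algebraMap N F) hmdvdg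
    rw [Polynomial.map_sub, Polynomial.map_pow, map_X, map_C, halg] at h1
    rwa [hXp]
  obtain ⟨i, hip, hassoc⟩ := (dvd_prime_pow (prime_X_sub_C x) p).mp hmapdvd
  have heq : (minpoly N x).map (algebraMap N F) = (X - C x) ^ i :=
    eq_of_monic_of_associated ((minpoly.monic hint).map _) ((monic_X_sub_C x).pow i) hassoc
  have hi : i = (minpoly N x).natDegree := by
    have h1 : ((minpoly N x).map (algebraMap N F)).natDegree = (minpoly N x).natDegree :=
      natDegree_map _
    rw [heq, natDegree_pow, natDegree_X_sub_C, mul_one] at h1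
    exact h1
  have hi1 : 1 ≤ i := by omega
  have hilt : i ≤ p - 1 := by omega
  have hcoe : ((X - C x) ^ i).coeff (i - 1) = -((i : F) * x) := by
    have h1 : (X : F[X]) - C x = X + C (-x) := by rw [map_neg, sub_eq_add_neg]
    rw [h1, coeff_X_add_C_pow]
    have h2 : i - (i - 1) = 1 := by omega
    have h3 : i.choose (i - 1) = i := by
      have := Nat.choose_symm (n := i) (k := 1) hi1
      rw [← h2] at this ⊢
      rw [this, h2, Nat.choose_one_right]
    rw [h2, h3, pow_one]
    ring
  have hcm : ((minpoly N x).coeff (i - 1) : F) = -((i : F) * x) := by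
    have h1 := coeff_map (algebraMap N F) (p := minpoly N x) (i - 1)
    rw [heq] at h1
    rw [← halg ((minpoly N x).coeff (i - 1)), ← h1, hcoe]
  have hiF : ((i : ℕ) : F) ≠ 0 := by
    rw [Ne, CharP.cast_eq_zero_iff F p]
    intro hdvd
    have := Nat.le_of_dvd (by omega) hdvd
    omega
  have hc : (-((minpoly N x).coeff (i - 1) : F)) / ((i : ℕ) : F) = x := by
    rw [hcm, neg_neg, mul_comm, mul_div_assoc, div_self hiF, mul_one]
  rw [← hc]
  exact N.div_mem (N.neg_mem ((minpoly N x).coeff (i - 1)).2) (natCast_mem N i)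

end Stmt15Aux

end Stmt15Aux


/-- Let `φ` be an anisotropic quasi-Pfister form or an anisotropic
quasi-Pfister neighbor over `F`, and `x ∈ F×`. Then `φ ⊗ ⟨1, x, …, x^(p-1)⟩` is
isotropic iff `x ∈ N_F(φ)`. -/
theorem stmt_15 (p : ℕ) [Fact p.Prime] {F : Type u} [Field F] [CharP F p]
    {n : ℕ} (φ : Fin n → F) (hφan : QLF.Anisotropic p φ)
    (hφ : QLF.IsQuasiPfister p φ ∨ QLF.IsQPNeighbor p φ)
    (x : F) (hx : x ≠ 0) :
    QLF.Isotropic p (QLF.tensor p φ fun j : Fin p => x ^ (j : ℕ)) ↔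
      x ∈ QLF.normField p φ := by
  classical
  obtain ⟨m, b, c, hc, hcoef, hvals, hdim⟩ :
      ∃ (m : ℕ) (b : Fin m → F) (c : F), c ≠ 0 ∧
        (∀ i, c * φ i ∈ QLF.values p (QLF.pfister p b)) ∧
        (QLF.values p (fun i => c * φ i) ⊆ QLF.values p (QLF.pfister p b)) ∧
        p ^ m < p * n := by
    rcases hφ with ⟨m, b, hb, T, hT⟩ | ⟨m, b, hb, c, hc, ⟨T, hTinj, hT⟩, hdim⟩
    · refine ⟨m, b, 1, one_ne_zero, ?_, ?_, ?_⟩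
      · intro i
        rw [one_mul]
        obtain ⟨y, hy⟩ := Stmt15Aux.coeff_mem_values p φ i
        exact ⟨T y, by rw [← hT y, hy]⟩
      · rintro u ⟨y, hy⟩
        rw [Stmt15Aux.eval_mul_left, one_mul] at hy
        exact ⟨T y, by rw [← hT y, hy]⟩
      · have h1 : n = p ^ m := by
          have h2 := T.finrank_eq
          rwa [Module.finrank_pi, Module.finrank_pi, Fintype.card_fin, Fintype.card_fun,
            Fintype.card_fin, Fintype.card_fin] at h2
        have hp2 := (Fact.out : p.Prime).two_le
        have hpos : 0 < p ^ m := pow_pos (by omega) m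
        rw [h1]
        nlinarith [hpos, hp2]
    · refine ⟨m, b, c, hc, ?_, ?_, ?_⟩
      · intro i
        obtain ⟨y, hy⟩ := Stmt15Aux.coeff_mem_values p (fun i => c * φ i) i
        exact ⟨T y, by rw [← hT y, hy]⟩
      · rintro u ⟨y, hy⟩
        exact ⟨T y, by rw [← hT y, hy]⟩
      · rwa [Fintype.card_fin, Fintype.card_fun, Fintype.card_fin, Fintype.card_fin] at hdim
  have hNK : QLF.normField p φ ≤ Stmt15Aux.KF p b := by
    refine Subfield.closure_le.mpr ?_
    rintro u (hu | hu)
    · exact Stmt15Aux.pSet_subset_values_pfister p b hu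
    · obtain ⟨u1, hu1, u2, hu2, hu1n, hu2n, rfl⟩ := hu
      have h1 : c * u1 ∈ Stmt15Aux.KF p b := by
        obtain ⟨y, hy⟩ := hu1
        exact hvals ⟨y, by rw [Stmt15Aux.eval_mul_left, hy]⟩
      have h2 : c * u2 ∈ Stmt15Aux.KF p b := by
        obtain ⟨y, hy⟩ := hu2
        exact hvals ⟨y, by rw [Stmt15Aux.eval_mul_left, hy]⟩
      have h3 : u1 / u2 = (c * u1) / (c * u2) := (mul_div_mul_left u1 u2 hc).symm
      rw [h3]
      exact Subfield.div_mem _ h1 h2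
  constructor
  · intro hiso
    obtain ⟨v, hval, hvne, hsum⟩ :=
      (Stmt15Aux.isotropic_tensor_iff p φ hφan _).mp hiso
    have hex : ∃ l, v l ≠ 0 := by
      by_contra hcon
      push_neg at hcon
      exact hvne (funext hcon)
    obtain ⟨l, hl⟩ := hex
    exact Stmt15Aux.mem_normField_of_rel p φ v hval hl hsum
  · intro hxN
    have hxK : x ∈ QLF.values p (QLF.pfister p b) := hNK hxN
    obtain ⟨v, hval, hvne, hsum⟩ :=
      Stmt15Aux.rel_of_mem_KF p φ hφan b c hc hcoef hdim hxK
    exact (Stmt15Aux.isotropic_tensor_iff p φ hφan _).mpr ⟨v, hval, hvne, hsum⟩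
end

section
/- Let φ be a minimal diagonal quasilinear p-form over F with 1 ∈ D_F(φ). Let n ≥ 2 and let b₁,…,bₙ ∈ D_F(φ) satisfy [Fᵖ(b₁,…,bₙ) : Fᵖ] = pⁿ (i.e., {b₁,…,bₙ} is p-independent over F). Let S be the set of functions λ : {1,…,n} → {0,…,p−1}, and let β = Σ_{λ∈S} x_λᵖ ∏ᵢ bᵢ^{λ(i)} with x_λ ∈ F. Then β ∈ D_F(φ) if and only if x_λ = 0 for every λ ∈ S with Σᵢ λ(i) ≥ 2 (equivalently, if and only if β = y₀ᵖ + Σᵢ bᵢ yᵢᵖ for some y₀,…,yₙ ∈ F). -/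
/-!
Diagonal quasilinear `p`-forms over a field `F` of characteristic `p`,
following Hoffmann and Zemková. A form of dimension `n` is recorded by its
coefficient tuple `a : ι → F` (for a finite index type `ι`), the form being
`x ↦ ∑ i, a i * (x i)^p`.
-/

universe u

namespace S16
open QLF Function

variable {p : ℕ} [Fact p.Prime] {F : Type u} [Field F] [CharP F p]

theorem mem_pth (x : F) : x ∈ pthSubfield p F ↔ ∃ t : F, t ^ p = x := by
  haveI : ExpChar F p := .prime Fact.out
  have h : pSet p F = ((frobenius F p).fieldRange : Set F) := by
    ext y; simp [pSet, frobenius_def, RingHom.mem_fieldRange, eq_comm]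
  constructor
  · intro hx
    rw [pthSubfield, h, Subfield.closure_eq] at hx
    obtain ⟨t, ht⟩ := hx; exact ⟨t, ht⟩
  · intro ⟨t, ht⟩
    exact Subfield.subset_closure ⟨t, ht⟩

theorem pth_mem (t : F) : t ^ p ∈ pthSubfield p F := (mem_pth _).2 ⟨t, rfl⟩

theorem smul_def' (s : pthSubfield p F) (x : F) : s • x = (s : F) * x := rfl

section Monos

variable {ι : Type*} [Fintype ι]

/-- the monomials in `c` with exponents below `p`. -/
def monos (p : ℕ) (c : ι → F) (lam : ι → Fin p) : F := ∏ i, c i ^ (lam i : ℕ)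

theorem monos_zero (c : ι → F) : monos p c 0 = 1 := by simp [monos]

theorem monos_single [DecidableEq ι] (c : ι → F) (i : ι) :
    monos p c (Pi.single i 1) = c i := by
  classical
  have h2 : 2 ≤ p := (Fact.out : p.Prime).two_le
  rw [monos, Finset.prod_eq_single i]
  · simp [Fin.val_one', Nat.mod_eq_of_lt h2]
  · intro j _ hj; simp [Pi.single_eq_of_ne hj]
  · simp

theorem mul_mem_spanMono (c : ι → F) (lam mu : ι → Fin p) :
    monos p c lam * monos p c mu ∈
      Submodule.span (pthSubfield p F) (Set.range (monos p c)) := by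
  have hp : 0 < p := (Fact.out : p.Prime).pos
  set r : ι → Fin p := fun i => ⟨((lam i : ℕ) + (mu i : ℕ)) % p, Nat.mod_lt _ hp⟩ with hr
  set q : ι → ℕ := fun i => ((lam i : ℕ) + (mu i : ℕ)) / p with hq
  have key : monos p c lam * monos p c mu = (∏ i, c i ^ q i) ^ p * monos p c r := by
    rw [monos, monos, monos, ← Finset.prod_mul_distrib, ← Finset.prod_pow,
      ← Finset.prod_mul_distrib]
    refine Finset.prod_congr rfl fun i _ => ?_
    rw [← pow_add, ← pow_mul, ← pow_add]
    congr 1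
    show (lam i : ℕ) + (mu i : ℕ) = q i * p + ((lam i : ℕ) + (mu i : ℕ)) % p
    simp only [hq]
    exact (Nat.div_add_mod' _ _).symm
  rw [key]
  exact Submodule.smul_mem _ (⟨_, pth_mem _⟩ : pthSubfield p F)
    (Submodule.subset_span ⟨r, rfl⟩)

end Monos
end S16
namespace S16
open QLF Function
variable {p : ℕ} [Fact p.Prime] {F : Type u} [Field F] [CharP F p]
section Monos2
variable {ι : Type*} [Fintype ι]

theorem one_mem_spanMono (c : ι → F) :
    (1 : F) ∈ Submodule.span (pthSubfield p F) (Set.range (monos p c)) :=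
  monos_zero (p := p) c ▸ Submodule.subset_span ⟨0, rfl⟩

theorem mul_mem_spanMono' (c : ι → F) (x y : F)
    (hx : x ∈ Submodule.span (pthSubfield p F) (Set.range (monos p c)))
    (hy : y ∈ Submodule.span (pthSubfield p F) (Set.range (monos p c))) :
    x * y ∈ Submodule.span (pthSubfield p F) (Set.range (monos p c)) := by
  have h : Submodule.span (pthSubfield p F) (Set.range (monos p c)) *
      Submodule.span (pthSubfield p F) (Set.range (monos p c)) ≤
      Submodule.span (pthSubfield p F) (Set.range (monos p c)) := by
    rw [Submodule.span_mul_span]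
    refine Submodule.span_le.2 ?_
    rintro z ⟨a, ⟨lam, rfl⟩, b, ⟨mu, rfl⟩, rfl⟩
    exact mul_mem_spanMono _ _ _
  exact h (Submodule.mul_mem_mul hx hy)

noncomputable def monoAlg (c : ι → F) : Subalgebra (pthSubfield p F) F :=
  Submodule.toSubalgebra (Submodule.span _ (Set.range (monos p c)))
    (one_mem_spanMono c) (mul_mem_spanMono' c)

theorem monoAlg_fg (c : ι → F) : (Subalgebra.toSubmodule (monoAlg (p := p) c)).FG := by
  have : Subalgebra.toSubmodule (monoAlg (p := p) c) =
      Submodule.span (pthSubfield p F) (Set.range (monos p c)) := rfl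
  rw [this]
  exact Submodule.fg_span (Set.finite_range _)

noncomputable def monoField (c : ι → F) : Subfield F :=
  { (monoAlg (p := p) c).toSubring with
    inv_mem' := by
      intro x hx
      have hx' : x ∈ monoAlg (p := p) c := hx
      by_cases hx0 : x = 0
      · have h0 : (0 : F)⁻¹ ∈ monoAlg (p := p) c := by
          simp only [inv_zero]; exact zero_mem _
        exact hx0 ▸ h0
      · have halg : IsAlgebraic (pthSubfield p F) x :=
          (IsIntegral.of_mem_of_fg (monoAlg (p := p) c) (monoAlg_fg c) x hx').isAlgebraic
        exact Subalgebra.inv_mem_of_algebraic (monoAlg (p := p) c) (x := ⟨x, hx'⟩) halg }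

theorem mem_monoField (c : ι → F) (x : F) :
    x ∈ monoField (p := p) c ↔ x ∈ Submodule.span (pthSubfield p F) (Set.range (monos p c)) :=
  Iff.rfl

theorem adjoin_eq_monoField (c : ι → F) : adjoin p (Set.range c) = monoField (p := p) c := by
  classical
  apply le_antisymm
  · rw [adjoin, Subfield.closure_le]
    rintro z (⟨t, rfl⟩ | ⟨i, rfl⟩)
    · show (t : F) ^ p ∈ Submodule.span (pthSubfield p F) (Set.range (monos p c))
      have := Submodule.smul_mem (Submodule.span (pthSubfield p F) (Set.range (monos p c)))
        (⟨t ^ p, pth_mem t⟩ : pthSubfield p F) (one_mem_spanMono c)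
      rw [smul_def'] at this
      simpa using this
    · show c i ∈ Submodule.span (pthSubfield p F) (Set.range (monos p c))
      have h := Submodule.subset_span (R := pthSubfield p F)
        (s := Set.range (monos p c)) ⟨Pi.single i 1, rfl⟩
      rwa [monos_single] at h
  · intro x hx
    rw [mem_monoField] at hx
    refine Submodule.span_induction ?_ ?_ ?_ ?_ hx
    · rintro z ⟨lam, rfl⟩
      exact Subfield.prod_mem _ fun i _ =>
        Subfield.pow_mem _ (Subfield.subset_closure (Set.mem_union_right _ (Set.mem_range_self i))) _
    · exact zero_mem _
    · exact fun a b _ _ ha hb => add_mem ha hb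
    · intro s a _ ha
      rw [smul_def']
      exact mul_mem (Subfield.closure_mono Set.subset_union_left s.2) ha

def subSubmodule (N : Subfield F) (hN : pthSubfield p F ≤ N) :
    Submodule (pthSubfield p F) F where
  carrier := N
  add_mem' := fun ha hb => add_mem ha hb
  zero_mem' := zero_mem _
  smul_mem' := fun s x hx => by rw [smul_def']; exact mul_mem (hN s.2) hx

theorem span_subfield (N : Subfield F) (hN : pthSubfield p F ≤ N) :
    Submodule.span (pthSubfield p F) (N : Set F) = subSubmodule N hN :=
  le_antisymm (Submodule.span_le.2 fun _ hx => hx) fun _ hx => Submodule.subset_span hx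

theorem pth_le_adjoin (s : Set F) : pthSubfield p F ≤ adjoin p s :=
  Subfield.closure_mono Set.subset_union_left

theorem deg_adjoin (c : ι → F) :
    degOver (pthSubfield p F) (adjoin p (Set.range c)) =
      Module.finrank (pthSubfield p F)
        (Submodule.span (pthSubfield p F) (Set.range (monos p c))) := by
  have hN := pth_le_adjoin (p := p) (Set.range c)
  have h2 : subSubmodule (adjoin p (Set.range c)) hN =
      Submodule.span (pthSubfield p F) (Set.range (monos p c)) := by
    refine SetLike.ext fun x => ?_
    change x ∈ adjoin p (Set.range c) ↔ _
    rw [adjoin_eq_monoField, mem_monoField]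
  rw [degOver, span_subfield _ hN, h2]

theorem finrank_spanMono_le (c : ι → F) :
    Module.finrank (pthSubfield p F)
        (Submodule.span (pthSubfield p F) (Set.range (monos p c))) ≤
      p ^ Fintype.card ι := by
  classical
  refine (finrank_span_le_card (R := pthSubfield p F) (Set.range (monos p c))).trans ?_
  rw [Set.toFinset_card]
  refine (Fintype.card_range_le _).trans ?_
  rw [Fintype.card_fun, Fintype.card_fin]

theorem mono_li (c : ι → F)
    (h : Module.finrank (pthSubfield p F)
        (Submodule.span (pthSubfield p F) (Set.range (monos p c))) = p ^ Fintype.card ι) :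
    LinearIndependent (pthSubfield p F) (monos p c) := by
  classical
  rw [linearIndependent_iff_card_eq_finrank_span]
  rw [Set.finrank, h, Fintype.card_fun, Fintype.card_fin]

end Monos2
end S16
namespace S16
open QLF Function
variable {p : ℕ} [Fact p.Prime] {F : Type u} [Field F] [CharP F p]

section Values
variable {d : ℕ} (φ : Fin d → F)

theorem eval_zero' : QLF.eval p φ (0 : Fin d → F) = 0 := by
  have hp : p ≠ 0 := (Fact.out : p.Prime).ne_zero
  simp [QLF.eval, zero_pow hp]

theorem eval_add (x y : Fin d → F) : QLF.eval p φ (x + y) = QLF.eval p φ x + QLF.eval p φ y := by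
  haveI : ExpChar F p := .prime Fact.out
  simp only [QLF.eval, Pi.add_apply]
  rw [← Finset.sum_add_distrib]
  exact Finset.sum_congr rfl fun i _ => by rw [add_pow_char, mul_add]

theorem eval_smul (t : F) (x : Fin d → F) : QLF.eval p φ (t • x) = t ^ p * QLF.eval p φ x := by
  simp only [QLF.eval, Pi.smul_apply, smul_eq_mul, Finset.mul_sum]
  exact Finset.sum_congr rfl fun i _ => by rw [mul_pow]; ring

def valSub : Submodule (pthSubfield p F) F where
  carrier := values p φ
  zero_mem' := ⟨0, eval_zero' φ⟩
  add_mem' := by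
    rintro a b ⟨xa, ha⟩ ⟨xb, hb⟩
    exact ⟨xa + xb, by rw [eval_add, ha, hb]⟩
  smul_mem' := by
    rintro s v ⟨xv, hv⟩
    obtain ⟨t, ht⟩ := (mem_pth (s : F)).1 s.2
    exact ⟨t • xv, by rw [eval_smul, ht, hv, smul_def']⟩

theorem mem_valSub (x : F) : x ∈ valSub (p := p) φ ↔ x ∈ values p φ := Iff.rfl

theorem eval_single (i : Fin d) : QLF.eval p φ (Pi.single i 1) = φ i := by
  classical
  have hp : p ≠ 0 := (Fact.out : p.Prime).ne_zero
  rw [QLF.eval, Finset.sum_eq_single i]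
  · simp
  · intro j _ hj; simp [Pi.single_eq_of_ne hj, zero_pow hp]
  · simp

theorem phi_mem_values (i : Fin d) : φ i ∈ values p φ := ⟨Pi.single i 1, eval_single φ i⟩

theorem valSub_eq_span :
    valSub (p := p) φ = Submodule.span (pthSubfield p F) (Set.range φ) := by
  apply le_antisymm
  · rintro v ⟨xv, rfl⟩
    rw [QLF.eval]
    refine Submodule.sum_mem _ fun i _ => ?_
    have := Submodule.smul_mem (Submodule.span (pthSubfield p F) (Set.range φ))
      (⟨xv i ^ p, pth_mem _⟩ : pthSubfield p F) (Submodule.subset_span ⟨i, rfl⟩)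
    rw [smul_def'] at this
    rw [mul_comm]
    exact this
  · refine Submodule.span_le.2 ?_
    rintro v ⟨i, rfl⟩
    exact phi_mem_values φ i

theorem valSub_fd : FiniteDimensional (pthSubfield p F) (valSub (p := p) φ) := by
  rw [valSub_eq_span]
  exact FiniteDimensional.span_of_finite _ (Set.finite_range φ)

theorem valSub_finrank_le :
    Module.finrank (pthSubfield p F) (valSub (p := p) φ) ≤ d := by
  classical
  rw [valSub_eq_span]
  refine (finrank_span_le_card (R := pthSubfield p F) (Set.range φ)).trans ?_
  rw [Set.toFinset_card]
  exact (Fintype.card_range_le φ).trans (by rw [Fintype.card_fin])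

theorem values_subset_normField (h1 : (1 : F) ∈ values p φ) :
    values p φ ⊆ ↑(normField p φ) := by
  intro v hv
  by_cases hv0 : v = 0
  · rw [hv0]; exact zero_mem _
  · refine Subfield.subset_closure (Set.mem_union_right _ ?_)
    exact ⟨v, hv, 1, h1, hv0, one_ne_zero, (div_one v).symm⟩

end Values

section Helpers
variable {α γ : Type*} [Fintype α] [Fintype γ]

theorem sum_of_injective {M : Type*} [AddCommMonoid M]
    {h : α → γ} (hinj : Injective h) (f : γ → M) (h0 : ∀ μ, μ ∉ Set.range h → f μ = 0) :
    ∑ μ, f μ = ∑ a, f (h a) := by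
  classical
  have h1 : ∑ μ ∈ Finset.univ.image h, f μ = ∑ μ, f μ := by
    refine Finset.sum_subset (Finset.subset_univ _) ?_
    intro μ _ hμ
    exact h0 μ (by simpa [Finset.mem_image] using hμ)
  rw [← h1, Finset.sum_image fun a _ b _ hab => hinj hab]

theorem prod_of_injective {M : Type*} [CommMonoid M]
    {h : α → γ} (hinj : Injective h) (f : γ → M) (h0 : ∀ μ, μ ∉ Set.range h → f μ = 1) :
    ∏ μ, f μ = ∏ a, f (h a) := by
  classical
  have h1 : ∏ μ ∈ Finset.univ.image h, f μ = ∏ μ, f μ := by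
    refine Finset.prod_subset (Finset.subset_univ _) ?_
    intro μ _ hμ
    exact h0 μ (by simpa [Finset.mem_image] using hμ)
  rw [← h1, Finset.prod_image fun a _ b _ hab => hinj hab]

theorem val_one' : ((1 : Fin p) : ℕ) = 1 := by
  rw [Fin.val_one', Nat.mod_eq_of_lt (Fact.out : p.Prime).two_le]

theorem deg_single [DecidableEq γ] (u : γ) :
    ∑ v, ((Pi.single (M := fun _ => Fin p) u 1 v : Fin p) : ℕ) = 1 := by
  rw [Finset.sum_eq_single u]
  · rw [Pi.single_eq_same, val_one']
  · intro v _ hv; rw [Pi.single_eq_of_ne hv]; rfl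
  · simp

theorem single_inj [DecidableEq γ] {u v : γ} (h : Pi.single (M := fun _ => Fin p) u 1 = Pi.single v 1) :
    u = v := by
  by_contra huv
  have := congrFun h u
  rw [Pi.single_eq_same, Pi.single_eq_of_ne huv] at this
  have h2 := congrArg Fin.val this
  rw [val_one'] at h2
  simp at h2

theorem single_ne_zero'' [DecidableEq γ] (u : γ) : Pi.single (M := fun _ => Fin p) u 1 ≠ (0 : γ → Fin p) := by
  intro h
  have := congrFun h u
  rw [Pi.single_eq_same] at this
  have h2 := (Fact.out : p.Prime).two_le
  exact absurd (congrArg (Fin.val) this) (by rw [val_one']; simp)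

theorem sum_eq_one_nat {f : γ → ℕ} (h : ∑ a, f a = 1) :
    ∃ i, f i = 1 ∧ ∀ j, j ≠ i → f j = 0 := by
  classical
  have hex : ∃ i, f i ≠ 0 := by
    by_contra hc; push_neg at hc
    rw [Finset.sum_eq_zero (fun i _ => hc i)] at h; exact one_ne_zero h.symm
  obtain ⟨i, hi⟩ := hex
  have hle : f i ≤ 1 := h ▸ Finset.single_le_sum (fun j _ => Nat.zero_le _) (Finset.mem_univ i)
  have hfi : f i = 1 := le_antisymm hle (Nat.one_le_iff_ne_zero.2 hi)
  refine ⟨i, hfi, fun j hj => ?_⟩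
  have hsplit : f i + ∑ a ∈ Finset.univ.erase i, f a = 1 := by
    rw [Finset.add_sum_erase _ f (Finset.mem_univ i)]; exact h
  have hz : ∑ a ∈ Finset.univ.erase i, f a = 0 := by omega
  exact (Finset.sum_eq_zero_iff.1 hz) j (Finset.mem_erase.2 ⟨hj, Finset.mem_univ j⟩)

end Helpers
end S16
namespace S16
open QLF Function
variable {p : ℕ} [Fact p.Prime] {F : Type u} [Field F] [CharP F p]

theorem lam_cases {n : ℕ} (lam : Fin n → Fin p) (hdeg : ∑ i, (lam i : ℕ) ≤ 1) :
    lam = 0 ∨ ∃ i, lam = Pi.single i 1 := by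
  classical
  rcases Nat.le_one_iff_eq_zero_or_eq_one.1 hdeg with h0 | h1
  · left
    funext i
    have := Finset.sum_eq_zero_iff.1 h0 i (Finset.mem_univ i)
    exact Fin.ext (by simpa using this)
  · right
    obtain ⟨i, hi, hzero⟩ := sum_eq_one_nat h1
    refine ⟨i, funext fun j => ?_⟩
    by_cases hj : j = i
    · subst hj
      exact Fin.ext (by rw [hi, Pi.single_eq_same, val_one'])
    · rw [Pi.single_eq_of_ne hj]
      exact Fin.ext (by simpa using hzero j hj)

theorem sum_reduce {n : ℕ} (b : Fin n → F) (x : (Fin n → Fin p) → F)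
    (hvan : ∀ lam : Fin n → Fin p, 2 ≤ ∑ i, (lam i : ℕ) → x lam = 0) :
    ∑ lam : Fin n → Fin p, x lam ^ p * ∏ i, b i ^ ((lam i : ℕ))
      = x 0 ^ p + ∑ i, b i * x (Pi.single i 1) ^ p := by
  classical
  have hp : p ≠ 0 := (Fact.out : p.Prime).ne_zero
  set ι₁ : Option (Fin n) → (Fin n → Fin p) :=
    fun o => o.elim 0 (fun i => Pi.single i 1) with hι₁
  have hinj : Injective ι₁ := by
    rintro (_ | i) (_ | i') h <;> simp only [hι₁, Option.elim] at h
    · rfl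
    · exact absurd h.symm (single_ne_zero'' i')
    · exact absurd h (single_ne_zero'' i)
    · rw [single_inj h]
  have hsum := sum_of_injective hinj
    (fun lam => x lam ^ p * ∏ i, b i ^ ((lam i : ℕ))) ?_
  · rw [hsum, Fintype.sum_option]
    congr 1
    · simp [hι₁]
    · refine Finset.sum_congr rfl fun i _ => ?_
      have : ∏ j, b j ^ ((Pi.single (M := fun _ => Fin p) i 1 j : Fin p) : ℕ) = b i :=
        monos_single (p := p) b i
      simp only [hι₁, Option.elim]
      rw [this, mul_comm]
  · intro lam hlam
    have hd2 : 2 ≤ ∑ i, (lam i : ℕ) := by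
      by_contra hlt
      push_neg at hlt
      rcases lam_cases lam (by omega) with h0 | ⟨i, hi⟩
      · exact hlam ⟨none, h0.symm⟩
      · exact hlam ⟨some i, hi.symm⟩
    rw [hvan lam hd2, zero_pow hp, zero_mul]

end S16
namespace S16
open QLF Function
variable {p : ℕ} [Fact p.Prime] {F : Type u} [Field F] [CharP F p]

set_option maxHeartbeats 2000000 in
set_option synthInstance.maxHeartbeats 400000 in
theorem hard {d : ℕ} (φ : Fin d → F) (hmin : Minimal p φ)
    (h1 : (1 : F) ∈ values p φ)
    {n : ℕ} (b : Fin n → F) (hb : ∀ i, b i ∈ values p φ)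
    (hind : degOver (pthSubfield p F) (adjoin p (Set.range b)) = p ^ n)
    (x : (Fin n → Fin p) → F) (β : F)
    (hβ : β = ∑ lam : Fin n → Fin p, x lam ^ p * ∏ i, b i ^ ((lam i : ℕ)))
    (hβv : β ∈ values p φ) :
    ∀ lam : Fin n → Fin p, 2 ≤ ∑ i, (lam i : ℕ) → x lam = 0 := by
  classical
  intro lam0 hdeg0
  have hp : p ≠ 0 := (Fact.out : p.Prime).ne_zero
  -- b-monomials linearly independent
  have hlib : LinearIndependent (pthSubfield p F) (monos p b) := by
    apply mono_li
    rw [← deg_adjoin, hind, Fintype.card_fin]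
  -- the family 1, b
  set e : Fin (n + 1) → F := Fin.cons 1 b with he
  set ι₂ : Fin (n + 1) → (Fin n → Fin p) :=
    Fin.cons 0 (fun i => Pi.single i 1) with hι₂
  have hcomp : monos p b ∘ ι₂ = e := by
    funext j
    refine Fin.cases ?_ (fun i => ?_) j
    · simp only [comp_apply, he, hι₂, Fin.cons_zero]
      exact monos_zero b
    · simp only [comp_apply, he, hι₂, Fin.cons_succ]
      exact monos_single b i
  have hι₂inj : Injective ι₂ := by
    intro a a' h
    rcases Fin.eq_zero_or_eq_succ a with rfl | ⟨i, rfl⟩ <;>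
      rcases Fin.eq_zero_or_eq_succ a' with rfl | ⟨i', rfl⟩ <;>
        simp only [hι₂, Fin.cons_zero, Fin.cons_succ] at h
    · rfl
    · exact absurd h.symm (single_ne_zero'' i')
    · exact absurd h (single_ne_zero'' i)
    · rw [single_inj h]
  have hlie : LinearIndependent (pthSubfield p F) e := hcomp ▸ hlib.comp ι₂ hι₂inj
  -- work in D
  set D := valSub (p := p) φ with hD
  haveI hFD : FiniteDimensional (pthSubfield p F) D := valSub_fd φ
  have heD : ∀ j, e j ∈ D := by
    intro j
    refine Fin.cases ?_ (fun i => ?_) j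
    · rw [he, Fin.cons_zero]; exact h1
    · rw [he, Fin.cons_succ]; exact hb i
  set eD : Fin (n + 1) → D := fun j => ⟨e j, heD j⟩ with heDdef
  have hlieD : LinearIndependent (pthSubfield p F) eD := by
    apply LinearIndependent.of_comp D.subtype
    exact hlie
  have heDinj : Injective eD := hlieD.injective
  set s : Set D := Set.range eD with hs_def
  have hs : LinearIndepOn (pthSubfield p F) id s := hlieD.linearIndepOn_id
  set t : Set D := LinearIndepOn.extend hs (Set.subset_univ s) with ht_def
  haveI htfin : Fintype t := FiniteDimensional.fintypeBasisIndex (Module.Basis.extend hs)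
  set B := Module.Basis.extend hs with hB
  have hst : s ⊆ t := LinearIndepOn.subset_extend hs _
  set one' : D := eD 0 with hone'
  have hone_t : one' ∈ t := hst ⟨0, rfl⟩
  have hone_coe : ((one' : D) : F) = 1 := by rw [hone', heDdef]; simp [he]
  set t' : Set D := t \ {one'} with ht'
  have htFin : t.Finite := Set.finite_coe_iff.mp (Finite.of_fintype _)
  haveI ht'fin : Fintype t' := (htFin.subset Set.diff_subset).fintype
  set c : t' → F := fun u => ((u : D) : F) with hc
  -- j : Fin n → t'
  have hjmem : ∀ i : Fin n, (eD i.succ) ∈ t' := fun i =>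
    ⟨hst ⟨i.succ, rfl⟩, fun hmem => (Fin.succ_ne_zero i) (heDinj hmem)⟩
  set j : Fin n → t' := fun i => ⟨eD i.succ, hjmem i⟩ with hj
  have hjinj : Injective j := fun a a' h =>
    Fin.succ_injective _ (heDinj (Subtype.ext_iff.1 h))
  have hcj : ∀ i, c (j i) = b i := by
    intro i
    rw [hc, hj]
    show ((eD i.succ : D) : F) = b i
    rw [heDdef]
    simp [he]
  -- the Option equivalence
  set ψ : Option t' ≃ t :=
    { toFun := fun o => o.elim ⟨one', hone_t⟩ (fun u => ⟨u, u.2.1⟩)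
      invFun := fun u => if h : (u : D) = one' then none else some ⟨u, ⟨u.2, h⟩⟩
      left_inv := by
        rintro (_ | u)
        · simp
        · simp only [Option.elim]
          exact dif_neg (show ¬((u : D) = one') from fun h => u.2.2 h)
      right_inv := by
        intro u
        by_cases h : (u : D) = one'
        · simp only [dif_pos h, Option.elim]; exact Subtype.ext h.symm
        · simp only [dif_neg h, Option.elim] } with hψ
  -- every value lies in the adjoin of the basis elements
  have hcoe_sum : ∀ v : D, (v : F) = ∑ u : t, ((B.repr v u : F) * ((B u : D) : F)) := by
    intro v
    calc (v : F) = ((∑ u : t, B.repr v u • B u : D) : F) := by rw [B.sum_repr v]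
    _ = ∑ u : t, (((B.repr v u • B u : D)) : F) := map_sum D.subtype _ _
    _ = ∑ u : t, (B.repr v u : F) * ((B u : D) : F) := Finset.sum_congr rfl fun u _ => rfl
  have hval_adj : ∀ v : D, (v : F) ∈ adjoin p (Set.range c) := by
    intro v
    rw [hcoe_sum v]
    refine sum_mem fun u _ => ?_
    refine mul_mem (pth_le_adjoin _ (B.repr v u).2) ?_
    rw [hB, Module.Basis.extend_apply_self]
    by_cases hu : (u : D) = one'
    · rw [hu, hone_coe]; exact one_mem _
    · exact Subfield.subset_closure (Set.mem_union_right _ ⟨⟨u, ⟨u.2, hu⟩⟩, rfl⟩)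
  have hvalN := values_subset_normField φ h1
  have hNle : normField p φ ≤ adjoin p (Set.range c) := by
    unfold QLF.normField QLF.adjoin
    rw [Subfield.closure_le]
    rintro z (hz | ⟨uu, hu, vv, hv, hu0, hv0, rfl⟩)
    · exact Subfield.subset_closure (Set.mem_union_left _ hz)
    · exact div_mem (hval_adj ⟨uu, hu⟩) (hval_adj ⟨vv, hv⟩)
  have hadjle : adjoin p (Set.range c) ≤ normField p φ := by
    unfold QLF.adjoin
    rw [Subfield.closure_le]
    rintro z (hz | ⟨u, rfl⟩)
    · show z ∈ normField p φ
      exact Subfield.subset_closure (Set.mem_union_left _ hz)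
    · exact hvalN (u : D).2
  have hNeq2 : Submodule.span (pthSubfield p F) ((normField p φ : Set F)) =
      Submodule.span (pthSubfield p F) ((adjoin p (Set.range c) : Set F)) := by
    rw [le_antisymm hNle hadjle]
  have hdegN : Module.finrank (pthSubfield p F)
      (Submodule.span (pthSubfield p F) (Set.range (monos p c))) = p ^ (d - 1) := by
    have h1' := deg_adjoin (p := p) c
    have h2' : degOver (pthSubfield p F) (normField p φ) =
        degOver (pthSubfield p F) (adjoin p (Set.range c)) := by
      unfold QLF.degOver
      rw [hNeq2]
    rw [← h1', ← h2']
    have h3' := hmin.2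
    rw [Fintype.card_fin] at h3'
    exact h3'
  have hcard_t : Fintype.card t = Module.finrank (pthSubfield p F) D :=
    (Module.finrank_eq_card_basis B).symm
  have hcard_opt : Fintype.card t' + 1 = Fintype.card t := by
    rw [← Fintype.card_congr ψ, Fintype.card_option]
  have hDle := valSub_finrank_le (p := p) φ
  have hle1 : p ^ (d - 1) ≤ p ^ (Fintype.card t') := by
    rw [← hdegN]; exact finrank_spanMono_le c
  have hplt : 1 < p := (Fact.out : p.Prime).one_lt
  have hd1 : d - 1 ≤ Fintype.card t' := (Nat.pow_le_pow_iff_right hplt).1 hle1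
  have hcard'' : Fintype.card t' ≤ d - 1 := by
    have h5 : Fintype.card t' + 1 ≤ d := by
      rw [hcard_opt, hcard_t]; exact hDle
    omega
  have hcard' : Fintype.card t' = d - 1 := le_antisymm hcard'' hd1
  have hlic : LinearIndependent (pthSubfield p F) (monos p c) :=
    mono_li c (by rw [hdegN, hcard'])
  -- representation A (via the basis)
  set vβ : D := ⟨β, hβv⟩ with hvβ
  set rv : Option t' → pthSubfield p F := fun o => B.repr vβ (ψ o) with hrv
  set ι₃ : Option t' → (t' → Fin p) := fun o => o.elim 0 (fun u => Pi.single u 1) with hι₃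
  have hι₃inj : Injective ι₃ := by
    rintro (_ | u) (_ | u') h <;> simp only [hι₃, Option.elim] at h
    · rfl
    · exact absurd h.symm (single_ne_zero'' u')
    · exact absurd h (single_ne_zero'' u)
    · rw [single_inj h]
  have hmono_ι₃ : ∀ o, monos p c (ι₃ o) = ((ψ o : D) : F) := by
    rintro (_ | u)
    · simp only [hι₃, Option.elim]
      rw [monos_zero]
      exact hone_coe.symm
    · simp only [hι₃, Option.elim]
      rw [monos_single]
      rfl
  set w : (t' → Fin p) → pthSubfield p F := Function.extend ι₃ rv 0 with hw
  have hrepA : β = ∑ μ : t' → Fin p, ((w μ : F) * monos p c μ) := by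
    have hv1 : ∑ μ : t' → Fin p, ((w μ : F) * monos p c μ)
        = ∑ o : Option t', ((w (ι₃ o) : F) * monos p c (ι₃ o)) := by
      refine sum_of_injective hι₃inj _ (fun μ hμ => ?_)
      rw [hw, extend_apply' _ _ _ (fun h => hμ (by exact h))]
      simp
    have hv2 : ∀ o, w (ι₃ o) = rv o := fun o => by rw [hw]; exact hι₃inj.extend_apply _ _ _
    have hv3 : ∑ o : Option t', ((w (ι₃ o) : F) * monos p c (ι₃ o))
        = ∑ o : Option t', ((B.repr vβ (ψ o) : F) * ((ψ o : D) : F)) := by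
      refine Finset.sum_congr rfl fun o _ => ?_
      rw [hv2, hmono_ι₃, hrv]
    have hv4 : ∑ o : Option t', ((B.repr vβ (ψ o) : F) * ((ψ o : D) : F))
        = ∑ u : t, ((B.repr vβ u : F) * ((u : D) : F)) :=
      Equiv.sum_comp ψ (fun u => ((B.repr vβ u : F) * ((u : D) : F)))
    have h7 : ∀ u : t, ((B u : D) : F) = ((u : D) : F) := fun u => by
      rw [hB, Module.Basis.extend_apply_self]
    have h6 := (hcoe_sum vβ).trans (Finset.sum_congr rfl fun u _ => by rw [h7])
    rw [hv1, hv3, hv4]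
    exact h6
  -- representation B (via the given expression for β)
  set emb : (Fin n → Fin p) → (t' → Fin p) := fun lam => Function.extend j lam 0 with hemb
  have hembinj : Injective emb := by
    intro a a' h
    funext i
    have h8 := congrFun h (j i)
    rw [hemb] at h8
    simpa [hjinj.extend_apply] using h8
  have hmono_emb : ∀ lam' : Fin n → Fin p, monos p c (emb lam') = monos p b lam' := by
    intro lam'
    have h9 : ∏ u : t', c u ^ ((emb lam' u : Fin p) : ℕ)
        = ∏ i, c (j i) ^ ((emb lam' (j i) : Fin p) : ℕ) := by
      refine prod_of_injective hjinj _ (fun u hu => ?_)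
      rw [hemb]
      simp only []
      rw [extend_apply' _ _ _ (fun hh => hu (by exact hh))]
      simp
    rw [monos, h9, monos]
    refine Finset.prod_congr rfl fun i _ => ?_
    rw [hcj, hemb]
    simp only []
    rw [hjinj.extend_apply]
  set g2 : (t' → Fin p) → pthSubfield p F :=
    Function.extend emb (fun lam' => ⟨x lam' ^ p, pth_mem _⟩) 0 with hg2
  have hrepB : β = ∑ μ : t' → Fin p, ((g2 μ : F) * monos p c μ) := by
    have hv1 : ∑ μ : t' → Fin p, ((g2 μ : F) * monos p c μ)
        = ∑ lam' : Fin n → Fin p, ((g2 (emb lam') : F) * monos p c (emb lam')) := by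
      refine sum_of_injective hembinj _ (fun μ hμ => ?_)
      rw [hg2, extend_apply' _ _ _ (fun h => hμ (by exact h))]
      simp
    rw [hv1, hβ]
    refine Finset.sum_congr rfl fun lam' _ => ?_
    rw [hmono_emb, hg2]
    rw [hembinj.extend_apply]
    rfl
  -- compare coefficients
  have hcoef : ∀ μ, w μ = g2 μ := by
    have hli := Fintype.linearIndependent_iff.1 hlic (fun μ => w μ - g2 μ) ?_
    · intro μ; have h10 := hli μ; rwa [sub_eq_zero] at h10
    · have h11 : ∀ μ : t' → Fin p, (w μ - g2 μ) • monos p c μ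
          = (w μ : F) * monos p c μ - (g2 μ : F) * monos p c μ := by
        intro μ; rw [sub_smul]; rfl
      rw [Finset.sum_congr rfl (fun μ _ => h11 μ), Finset.sum_sub_distrib, ← hrepA, ← hrepB,
        sub_self]
  have hA : w (emb lam0) = 0 := by
    rw [hw, extend_apply' _ _ _ ?_]
    · rfl
    · rintro ⟨o, ho⟩
      have hdA : ∑ u : t', ((ι₃ o u : Fin p) : ℕ) ≤ 1 := by
        rcases o with _ | u
        · simp [hι₃]
        · simp only [hι₃, Option.elim]
          exact le_of_eq (deg_single u)
      have hdB : ∑ u : t', ((emb lam0 u : Fin p) : ℕ) = ∑ i, ((lam0 i : Fin p) : ℕ) := by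
        rw [sum_of_injective hjinj (fun u => ((emb lam0 u : Fin p) : ℕ)) ?_]
        · refine Finset.sum_congr rfl fun i _ => ?_
          rw [hemb]
          simp only []
          rw [hjinj.extend_apply]
        · intro u hu
          rw [hemb]
          simp only []
          rw [extend_apply' _ _ _ (fun hh => hu (by exact hh))]
          rfl
      rw [ho, hdB] at hdA
      omega
  have hB2 : g2 (emb lam0) = ⟨x lam0 ^ p, pth_mem _⟩ := by
    rw [hg2]; exact hembinj.extend_apply _ _ _
  have hfin : x lam0 ^ p = 0 := by
    have h12 := (hcoef (emb lam0)).symm.trans hA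
    rw [hB2] at h12
    exact Subtype.ext_iff.1 h12
  exact (pow_eq_zero_iff hp).1 hfin

end S16
namespace S16
open QLF Function
variable {p : ℕ} [Fact p.Prime] {F : Type u} [Field F] [CharP F p]

theorem mem_values_of_rep {d : ℕ} (φ : Fin d → F) (h1 : (1 : F) ∈ values p φ)
    {n : ℕ} (b : Fin n → F) (hb : ∀ i, b i ∈ values p φ) (y : F) (z : Fin n → F) :
    y ^ p + ∑ i, b i * z i ^ p ∈ values p φ := by
  have h1' : (1 : F) ∈ valSub (p := p) φ := h1
  have hb' : ∀ i, b i ∈ valSub (p := p) φ := hb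
  have e1 := Submodule.smul_mem _ (⟨y ^ p, pth_mem y⟩ : pthSubfield p F) h1'
  rw [smul_def', mul_one] at e1
  have e2 : ∀ i, b i * z i ^ p ∈ valSub (p := p) φ := fun i => by
    have h := Submodule.smul_mem _ (⟨z i ^ p, pth_mem _⟩ : pthSubfield p F) (hb' i)
    rw [smul_def'] at h
    rwa [mul_comm] at h
  exact Submodule.add_mem _ e1 (Submodule.sum_mem _ fun i _ => e2 i)

end S16
/-- Let `φ` be a minimal quasilinear `p`-form over `F` with
`1 ∈ D_F(φ)`, `n ≥ 2`, and `b₁,…,bₙ ∈ D_F(φ)` `p`-independent over `F`, i.e.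
`[Fᵖ(b₁,…,bₙ) : Fᵖ] = pⁿ`. For `β = Σ_{λ} x_λᵖ ∏ᵢ bᵢ^{λ(i)}` (λ ranging over
functions `{1,…,n} → {0,…,p-1}`), one has `β ∈ D_F(φ)` iff `x_λ = 0` for all `λ`
with `Σᵢ λ(i) ≥ 2`, equivalently iff `β = y₀ᵖ + Σᵢ bᵢ yᵢᵖ` for some `yᵢ ∈ F`. -/
theorem stmt_16 (p : ℕ) [Fact p.Prime] {F : Type u} [Field F] [CharP F p]
    {d : ℕ} (φ : Fin d → F) (hmin : QLF.Minimal p φ)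
    (h1 : (1 : F) ∈ QLF.values p φ)
    (n : ℕ) (hn : 2 ≤ n) (b : Fin n → F)
    (hb : ∀ i, b i ∈ QLF.values p φ)
    (hind : QLF.degOver (QLF.pthSubfield p F) (QLF.adjoin p (Set.range b)) = p ^ n)
    (x : (Fin n → Fin p) → F) (β : F)
    (hβ : β = ∑ lam : Fin n → Fin p, x lam ^ p * ∏ i, b i ^ (lam i : ℕ)) :
    (β ∈ QLF.values p φ ↔
      ∀ lam : Fin n → Fin p, 2 ≤ ∑ i, (lam i : ℕ) → x lam = 0) ∧
    (β ∈ QLF.values p φ ↔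
      ∃ (y : F) (z : Fin n → F), β = y ^ p + ∑ i, b i * z i ^ p) := by
  classical
  have main : β ∈ QLF.values p φ →
      ∀ lam : Fin n → Fin p, 2 ≤ ∑ i, (lam i : ℕ) → x lam = 0 :=
    fun h => S16.hard φ hmin h1 b hb hind x β hβ h
  have easy : (∀ lam : Fin n → Fin p, 2 ≤ ∑ i, (lam i : ℕ) → x lam = 0) →
      ∃ (y : F) (z : Fin n → F), β = y ^ p + ∑ i, b i * z i ^ p := by
    intro hvan
    exact ⟨x 0, fun i => x (Pi.single i 1), hβ.trans (S16.sum_reduce b x hvan)⟩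
  have easy2 : (∃ (y : F) (z : Fin n → F), β = y ^ p + ∑ i, b i * z i ^ p) →
      β ∈ QLF.values p φ := by
    rintro ⟨y, z, hy⟩
    rw [hy]
    exact S16.mem_values_of_rep φ h1 b hb y z
  exact ⟨⟨fun h => main h, fun h => easy2 (easy h)⟩, ⟨fun h => easy (main h), easy2⟩⟩
end
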